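/- arXiv:2211.05399 — 3 statements merged into one kernel-verified Lean document; each statement's English description precedes it below -/
import Mathlib

section
/- (Bernstein inequality.) Let 1 ≤ q < ∞ and N > 0. There is a constant C = C(d,q) such that for every Schwartz function f on ℝ^d whose Fourier transform 𝓕f is supported in the closed ball {ξ : |ξ| ≤ N}, one has ‖f‖_{L^∞(ℝ^d)} ≤ C N^{d/q} ‖f‖_{L^q(ℝ^d)}. -/
open MeasureTheory Real FourierTransform
open scoped RealInnerProductSpace ContDiff SchwartzMap


-- dilation of Fourier integral
lemma fourier_dilate {d : ℕ} (N : ℝ) (hN : 0 < N) (g : EuclideanSpace ℝ (Fin d) → ℂ)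
    (w : EuclideanSpace ℝ (Fin d)) :
    𝓕 (fun ξ : EuclideanSpace ℝ (Fin d) => g (N⁻¹ • ξ)) w = (N ^ d : ℝ) • 𝓕 g (N • w) := by
  have hMeq : ∀ u : EuclideanSpace ℝ (Fin d), (𝐞 (-⟪(N:ℝ) • u, w⟫) • g (N⁻¹ • ((N:ℝ) • u)) : ℂ)
      = 𝐞 (-⟪u, (N:ℝ) • w⟫) • g u := by
    intro u
    rw [smul_smul, inv_mul_cancel₀ hN.ne', one_smul, real_inner_smul_left,
      real_inner_smul_right]
  have h := MeasureTheory.Measure.integral_comp_smul (volume : Measure (EuclideanSpace ℝ (Fin d)))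
    (fun ξ => (𝐞 (-⟪ξ, w⟫) • g (N⁻¹ • ξ) : ℂ)) N
  simp only [hMeq] at h
  rw [finrank_euclideanSpace_fin] at h
  rw [Real.fourier_eq, Real.fourier_eq, h, smul_smul, abs_inv,
    abs_of_nonneg (by positivity : (0:ℝ) ≤ N ^ d), mul_inv_cancel₀ (by positivity), one_smul]

noncomputable def myBump (d : ℕ) : ContDiffBump (0 : EuclideanSpace ℝ (Fin d)) :=
  ⟨1, 2, one_pos, one_lt_two⟩

noncomputable def bumpFun (d : ℕ) : EuclideanSpace ℝ (Fin d) → ℂ := fun x => ((myBump d) x : ℂ)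

lemma bumpFun_contDiff (d : ℕ) : ContDiff ℝ ∞ (bumpFun d) :=
  (ContinuousLinearMap.contDiff (n := ∞) Complex.ofRealCLM).comp ((myBump d).contDiff)

lemma bumpFun_compactSupport (d : ℕ) : HasCompactSupport (bumpFun d) :=
  (myBump d).hasCompactSupport.comp_left Complex.ofReal_zero

noncomputable def schwartzOfCompactSupport {d : ℕ} (f : EuclideanSpace ℝ (Fin d) → ℂ)
    (h1 : ContDiff ℝ ∞ f) (h2 : HasCompactSupport f) : 𝓢(EuclideanSpace ℝ (Fin d), ℂ) where
  toFun := f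
  smooth' := h1
  decay' := by
    intro k n
    have hc : Continuous fun x => ‖x‖ ^ k * ‖iteratedFDeriv ℝ n f x‖ :=
      (continuous_norm.pow k).mul
        ((h1.continuous_iteratedFDeriv (by exact_mod_cast le_top)).norm)
    have hcs : HasCompactSupport fun x => ‖x‖ ^ k * ‖iteratedFDeriv ℝ n f x‖ :=
      HasCompactSupport.mul_left ((h2.iteratedFDeriv n).norm)
    obtain ⟨x₀, hx₀⟩ := hc.exists_forall_ge_of_hasCompactSupport hcs
    exact ⟨_, hx₀⟩

noncomputable def Phi (d : ℕ) : 𝓢(EuclideanSpace ℝ (Fin d), ℂ) :=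
  schwartzOfCompactSupport (bumpFun d) (bumpFun_contDiff d) (bumpFun_compactSupport d)

lemma Phi_apply {d : ℕ} (x : EuclideanSpace ℝ (Fin d)) : Phi d x = ((myBump d) x : ℂ) := rfl

lemma Phi_eq_one {d : ℕ} {x : EuclideanSpace ℝ (Fin d)} (hx : ‖x‖ ≤ 1) : Phi d x = 1 := by
  rw [Phi_apply, (myBump d).one_of_mem_closedBall]
  · exact Complex.ofReal_one
  · simpa [myBump, Metric.mem_closedBall, dist_zero_right] using hx

noncomputable def psi (d : ℕ) : 𝓢(EuclideanSpace ℝ (Fin d), ℂ) :=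
  SchwartzMap.fourierTransformCLM ℝ (Phi d)

lemma psi_eq (d : ℕ) : ⇑(psi d) = 𝓕 ⇑(Phi d) := by
  simp [psi, SchwartzMap.fourier_coe]


variable {d : ℕ}


lemma schwartz_integrable_norm_rpow (f : 𝓢((EuclideanSpace ℝ (Fin d)), ℂ)) {r : ℝ} (hr : 1 ≤ r) :
    Integrable (fun x : (EuclideanSpace ℝ (Fin d)) => ‖f x‖ ^ r) (volume : Measure (EuclideanSpace ℝ (Fin d))) := by
  have hr0 : 0 < r := lt_of_lt_of_le one_pos hr
  set k : ℕ := Module.finrank ℝ (EuclideanSpace ℝ (Fin d)) + 1 with hk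
  set B : ℝ :=
    2 ^ k * ((Finset.Iic (k, 0)).sup (fun m => SchwartzMap.seminorm ℝ m.1 m.2)) f with hBdef
  have hB0 : (0:ℝ) ≤ B := mul_nonneg (by positivity) (apply_nonneg _ _)
  have key : ∀ x : (EuclideanSpace ℝ (Fin d)), ‖f x‖ ≤ B * (1 + ‖x‖) ^ (-(k:ℝ)) := by
    intro x
    have h1 : (0:ℝ) < (1 + ‖x‖) := by positivity
    have h2 := SchwartzMap.one_add_le_sup_seminorm_apply (𝕜 := ℝ) (m := (k, 0)) (k := k) (n := 0)
      le_rfl le_rfl f x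
    rw [norm_iteratedFDeriv_zero] at h2
    rw [Real.rpow_neg h1.le, mul_comm B, ← div_eq_inv_mul, Real.rpow_natCast,
      le_div_iff₀ (by positivity)]
    calc ‖f x‖ * (1 + ‖x‖) ^ k = (1 + ‖x‖) ^ k * ‖f x‖ := by ring
      _ ≤ B := h2
  have hfr : ((Module.finrank ℝ (EuclideanSpace ℝ (Fin d)) : ℝ)) < (k : ℝ) * r := by
    have h1 : ((Module.finrank ℝ (EuclideanSpace ℝ (Fin d)) : ℝ)) < (k : ℝ) := by exact_mod_cast Nat.lt_succ_self _
    have h2 : (k : ℝ) ≤ (k:ℝ) * r := le_mul_of_one_le_right (by positivity) hr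
    linarith
  have hintB : Integrable (fun x : (EuclideanSpace ℝ (Fin d)) => B ^ r * ((1 + ‖x‖) ^ (-((k:ℝ) * r)))) volume :=
    (integrable_one_add_norm hfr).const_mul _
  apply hintB.mono
  · exact (f.continuous.norm.rpow_const (fun x => Or.inr hr0.le)).aestronglyMeasurable
  · filter_upwards with x
    have h1 : (0:ℝ) < 1 + ‖x‖ := by positivity
    rw [Real.norm_of_nonneg (Real.rpow_nonneg (norm_nonneg _) r)]
    calc ‖f x‖ ^ r ≤ (B * (1 + ‖x‖) ^ (-(k:ℝ))) ^ r :=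
          Real.rpow_le_rpow (norm_nonneg _) (key x) hr0.le
      _ = B ^ r * (1 + ‖x‖) ^ (-((k:ℝ) * r)) := by
          rw [Real.mul_rpow hB0 (Real.rpow_nonneg h1.le _),
            show -((k:ℝ)*r) = (-(k:ℝ))*r by ring, Real.rpow_mul h1.le]
      _ ≤ ‖B ^ r * (1 + ‖x‖) ^ (-((k:ℝ) * r))‖ := le_abs_self _

lemma schwartz_memLp (f : 𝓢((EuclideanSpace ℝ (Fin d)), ℂ)) {r : ℝ} (hr : 1 ≤ r) :
    MemLp (⇑f) (ENNReal.ofReal r) (volume : Measure (EuclideanSpace ℝ (Fin d))) := by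
  have hr0 : 0 < r := lt_of_lt_of_le one_pos hr
  have hne : ENNReal.ofReal r ≠ 0 := by simp [ENNReal.ofReal_eq_zero, not_le, hr0]
  have hnetop : ENNReal.ofReal r ≠ ⊤ := ENNReal.ofReal_ne_top
  rw [← memLp_norm_rpow_iff (q := ENNReal.ofReal r) f.continuous.aestronglyMeasurable hne hnetop,
    ENNReal.toReal_ofReal hr0.le, ENNReal.div_self hne hnetop, memLp_one_iff_integrable]
  exact schwartz_integrable_norm_rpow f hr


variable {d : ℕ}

lemma representation (N : ℝ) (hN : 0 < N) (f : 𝓢(EuclideanSpace ℝ (Fin d), ℂ))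
    (hsupp : Function.support (𝓕 (⇑f)) ⊆ Metric.closedBall (0 : EuclideanSpace ℝ (Fin d)) N)
    (x : EuclideanSpace ℝ (Fin d)) :
    f x = ∫ y : EuclideanSpace ℝ (Fin d),
      f y • ((N ^ d : ℝ) • psi d (N • (y - x))) := by
  set h : EuclideanSpace ℝ (Fin d) → ℂ :=
    fun ξ => (𝐞 ⟪ξ, x⟫ : ℂ) * Phi d (N⁻¹ • ξ) with hh
  have h𝓕int : Integrable (𝓕 (⇑f)) (volume : Measure (EuclideanSpace ℝ (Fin d))) := by
    have : 𝓕 (⇑f) = ⇑(SchwartzMap.fourierTransformCLM ℝ f) := by simp [SchwartzMap.fourier_coe]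
    rw [this]; exact SchwartzMap.integrable _
  have hPhiNint : Integrable (fun ξ : EuclideanSpace ℝ (Fin d) => Phi d (N⁻¹ • ξ)) volume :=
    (MeasureTheory.integrable_comp_smul_iff volume (⇑(Phi d)) (inv_ne_zero hN.ne')).2
      (Phi d).integrable
  have hcontE : ∀ z : EuclideanSpace ℝ (Fin d),
      Continuous fun ξ : EuclideanSpace ℝ (Fin d) => (𝐞 ⟪ξ, z⟫ : ℂ) :=
    fun z => continuous_subtype_val.comp
      (Real.continuous_fourierChar.comp ((continuous_id.inner continuous_const)))
  have hhint : Integrable h volume := by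
    apply hPhiNint.bdd_mul (c := 1) (hcontE x).aestronglyMeasurable
    exact Filter.Eventually.of_forall fun ξ => le_of_eq (Circle.norm_coe (𝐞 ⟪ξ, x⟫))
  -- Step 1: inversion
  have step1 : f x = ∫ ξ, (𝐞 ⟪ξ, x⟫ : Circle) • 𝓕 (⇑f) ξ := by
    conv_lhs => rw [← f.continuous.fourierInv_fourier_eq f.integrable h𝓕int]
    exact Real.fourierInv_eq _ x
  -- Step 2: insert the multiplier
  have step2 : ∀ ξ, (𝐞 ⟪ξ, x⟫ : Circle) • 𝓕 (⇑f) ξ = 𝓕 (⇑f) ξ • h ξ := by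
    intro ξ
    by_cases hξ : 𝓕 (⇑f) ξ = 0
    · simp [hξ]
    · have hmem : ξ ∈ Metric.closedBall (0 : EuclideanSpace ℝ (Fin d)) N :=
        hsupp (Function.mem_support.2 hξ)
      have hnorm : ‖N⁻¹ • ξ‖ ≤ 1 := by
        rw [norm_smul, norm_inv, Real.norm_of_nonneg hN.le]
        rw [Metric.mem_closedBall, dist_zero_right] at hmem
        rw [inv_mul_le_iff₀ hN]
        linarith
      rw [hh]
      simp only [Phi_eq_one hnorm, mul_one, Circle.smul_def, smul_eq_mul]
      ring
  -- Step 3: multiplication formula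
  have hflip : (innerₗ (EuclideanSpace ℝ (Fin d))).flip = innerₗ (EuclideanSpace ℝ (Fin d)) := by
    ext u v
    simp only [LinearMap.flip_apply, innerₗ_apply_apply]
    exact real_inner_comm u v
  have step3 : ∫ ξ, 𝓕 (⇑f) ξ • h ξ = ∫ y, f y • 𝓕 h y := by
    have := VectorFourier.integral_fourierIntegral_smul_eq_flip
      (e := 𝐞) (L := innerₗ (EuclideanSpace ℝ (Fin d)))
      (μ := (volume : Measure (EuclideanSpace ℝ (Fin d))))
      (ν := (volume : Measure (EuclideanSpace ℝ (Fin d))))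
      Real.continuous_fourierChar continuous_inner f.integrable hhint
    rw [hflip] at this
    exact this
  -- Step 4: compute 𝓕 h
  have step4 : ∀ y, 𝓕 h y = (N ^ d : ℝ) • psi d (N • (y - x)) := by
    intro y
    have heq : ∀ ξ, (𝐞 (-⟪ξ, y⟫) : Circle) • h ξ
        = (𝐞 (-⟪ξ, y - x⟫) : Circle) • Phi d (N⁻¹ • ξ) := by
      intro ξ
      rw [hh]
      simp only [Circle.smul_def, smul_eq_mul, ← mul_assoc, ← Circle.coe_mul,
        ← AddChar.map_add_eq_mul]
      congr 3
      rw [inner_sub_right]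
      ring
    calc 𝓕 h y = ∫ ξ, (𝐞 (-⟪ξ, y⟫) : Circle) • h ξ := Real.fourier_eq _ _
      _ = ∫ ξ, (𝐞 (-⟪ξ, y - x⟫) : Circle) • Phi d (N⁻¹ • ξ) := by simp_rw [heq]
      _ = 𝓕 (fun ξ => Phi d (N⁻¹ • ξ)) (y - x) := (Real.fourier_eq _ _).symm
      _ = (N ^ d : ℝ) • 𝓕 (⇑(Phi d)) (N • (y - x)) := fourier_dilate N hN _ _
      _ = (N ^ d : ℝ) • psi d (N • (y - x)) := by rw [psi_eq]
  calc f x = ∫ ξ, (𝐞 ⟪ξ, x⟫ : Circle) • 𝓕 (⇑f) ξ := step1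
    _ = ∫ ξ, 𝓕 (⇑f) ξ • h ξ := by simp_rw [step2]
    _ = ∫ y, f y • 𝓕 h y := step3
    _ = ∫ y, f y • ((N ^ d : ℝ) • psi d (N • (y - x))) := by simp_rw [step4]


variable {d : ℕ}

set_option maxHeartbeats 2000000 in
/-- Bernstein inequality: for `1 ≤ q < ∞` there is `C = C(d,q)` such that every Schwartz
function `f` on `ℝ^d` with `𝓕f` supported in the ball of radius `N > 0` satisfies
`‖f‖_{L^∞} ≤ C N^{d/q} ‖f‖_{L^q}`. -/
theorem bernstein_inequality (d : ℕ) (hd : 1 ≤ d) (q : ℝ) (hq : 1 ≤ q) :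
    ∃ C : ℝ, 0 < C ∧ ∀ (N : ℝ), 0 < N →
      ∀ f : SchwartzMap (EuclideanSpace ℝ (Fin d)) ℂ,
        Function.support (𝓕 (⇑f)) ⊆ Metric.closedBall (0 : EuclideanSpace ℝ (Fin d)) N →
        ∀ x : EuclideanSpace ℝ (Fin d),
          ‖f x‖ ≤ C * N ^ ((d : ℝ) / q) *
            (∫ y : EuclideanSpace ℝ (Fin d), ‖f y‖ ^ q) ^ (1 / q) := by
  rcases eq_or_lt_of_le hq with hq1 | hq1
  · -- q = 1
    set M : ℝ := SchwartzMap.seminorm ℝ 0 0 (psi d) with hM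
    have hM0 : 0 ≤ M := apply_nonneg _ _
    refine ⟨M + 1, by positivity, fun N hN f hsupp x => ?_⟩
    have hNd : (0:ℝ) < N ^ d := by positivity
    have key : ‖f x‖ ≤ (M + 1) * N ^ d * ∫ y, ‖f y‖ := by
      rw [representation N hN f hsupp x]
      calc ‖∫ y, f y • ((N ^ d : ℝ) • psi d (N • (y - x)))‖
          ≤ ∫ y, ‖f y • ((N ^ d : ℝ) • psi d (N • (y - x)))‖ :=
            norm_integral_le_integral_norm _
        _ ≤ ∫ y, ‖f y‖ * ((M + 1) * N ^ d) := by
            apply integral_mono_of_nonneg (Filter.Eventually.of_forall fun y => norm_nonneg _)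
              (f.integrable.norm.mul_const _)
            filter_upwards with y
            rw [smul_eq_mul, norm_mul, norm_smul, Real.norm_of_nonneg hNd.le]
            apply mul_le_mul_of_nonneg_left _ (norm_nonneg _)
            calc N ^ d * ‖psi d (N • (y - x))‖ ≤ N ^ d * M :=
                  mul_le_mul_of_nonneg_left ((psi d).norm_le_seminorm ℝ _) hNd.le
              _ ≤ (M + 1) * N ^ d := by nlinarith
        _ = (M + 1) * N ^ d * ∫ y, ‖f y‖ := by
            rw [integral_mul_const]; ring
    have h1 : N ^ ((d : ℝ) / q) = N ^ d := by
      rw [← hq1, div_one, Real.rpow_natCast]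
    have h2 : (∫ y : EuclideanSpace ℝ (Fin d), ‖f y‖ ^ q) ^ (1 / q) = ∫ y, ‖f y‖ := by
      rw [← hq1]
      simp [Real.rpow_one]
    rw [h1, h2]
    exact key
  · -- q > 1
    have hpq : q.HolderConjugate (q.conjExponent) := Real.HolderConjugate.conjExponent hq1
    set p : ℝ := q.conjExponent with hp
    have hp1 : 1 ≤ p := hpq.symm.lt.le
    set Iψ : ℝ := ∫ y : EuclideanSpace ℝ (Fin d), ‖psi d y‖ ^ p with hIψ
    have hIψ0 : 0 ≤ Iψ := integral_nonneg fun y => Real.rpow_nonneg (norm_nonneg _) _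
    refine ⟨Iψ ^ (1/p) + 1, by positivity, fun N hN f hsupp x => ?_⟩
    have hNd : (0:ℝ) < N ^ d := by positivity
    -- the dilated-translated Schwartz function
    set eN : EuclideanSpace ℝ (Fin d) ≃L[ℝ] EuclideanSpace ℝ (Fin d) :=
      (LinearEquiv.smulOfNeZero ℝ _ N hN.ne').toContinuousLinearEquiv with heN
    set ψ₂ : 𝓢(EuclideanSpace ℝ (Fin d), ℂ) :=
      (SchwartzMap.compCLMOfContinuousLinearEquiv ℝ eN) (psi d) with hψ₂
    have hψ₂app : ∀ z, ψ₂ z = psi d (N • z) := fun z => rfl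
    set g0 : EuclideanSpace ℝ (Fin d) → ℂ := fun y => (N ^ d : ℝ) • psi d (N • (y - x)) with hg0
    have hg0' : g0 = fun y => (N ^ d : ℝ) • (⇑ψ₂ ∘ (fun y => y - x)) y := by
      funext y; rw [hg0]; simp [hψ₂app, Function.comp, Complex.real_smul, Complex.ofReal_pow]
    have hg0mem : MemLp g0 (ENNReal.ofReal p) volume := by
      rw [hg0']
      exact ((schwartz_memLp ψ₂ hp1).comp_measurePreserving
        (measurePreserving_sub_right volume x)).const_smul (N ^ d : ℝ)
    -- Hölder
    have holder := integral_mul_norm_le_Lp_mul_Lq (μ := (volume : Measure (EuclideanSpace ℝ (Fin d))))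
      hpq (schwartz_memLp f hq) hg0mem
    -- compute the Lp norm of g0
    have hA : ∫ y, ‖g0 y‖ ^ p = (N ^ d : ℝ) ^ p * ((N ^ d : ℝ)⁻¹ * Iψ) := by
      have h1 : ∀ y, ‖g0 y‖ ^ p = (N ^ d : ℝ) ^ p * ‖psi d (N • (y - x))‖ ^ p := by
        intro y
        rw [hg0, norm_smul, Real.norm_of_nonneg hNd.le,
          Real.mul_rpow hNd.le (norm_nonneg _)]
      simp_rw [h1]
      rw [integral_const_mul]
      congr 1
      have h2 : ∫ y : EuclideanSpace ℝ (Fin d), ‖psi d (N • (y - x))‖ ^ p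
          = ∫ y : EuclideanSpace ℝ (Fin d), ‖psi d (N • y)‖ ^ p := by
        exact integral_sub_right_eq_self (fun z => ‖psi d (N • z)‖ ^ p) x
      rw [h2]
      have h3 := MeasureTheory.Measure.integral_comp_smul
        (volume : Measure (EuclideanSpace ℝ (Fin d))) (fun z => ‖psi d z‖ ^ p) N
      rw [finrank_euclideanSpace_fin] at h3
      rw [h3, abs_inv, abs_of_nonneg hNd.le, smul_eq_mul]
    have hq0 : q ≠ 0 := hpq.pos.ne'
    have hp0 : p ≠ 0 := hpq.symm.pos.ne'
    have hexp : ((d : ℝ) * p + -(d:ℝ)) * (1/p) = (d : ℝ) / q := by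
      have h := hpq.inv_add_inv_eq_one
      field_simp
      field_simp at h
      nlinarith [h]
    have hrpow : ((N ^ d : ℝ) ^ p * ((N ^ d : ℝ)⁻¹ * Iψ)) ^ (1/p)
        = N ^ ((d : ℝ) / q) * Iψ ^ (1/p) := by
      have hNd' : (N ^ d : ℝ) = N ^ (d : ℝ) := (Real.rpow_natCast N d).symm
      have l1 : (N ^ ((d:ℝ))) ^ p = N ^ ((d:ℝ) * p) := (Real.rpow_mul hN.le _ _).symm
      have l2 : (N ^ ((d:ℝ)))⁻¹ = N ^ (-(d:ℝ)) := (Real.rpow_neg hN.le _).symm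
      rw [hNd', l1, l2, ← mul_assoc, ← Real.rpow_add hN,
        Real.mul_rpow (Real.rpow_pos_of_pos hN _).le hIψ0, ← Real.rpow_mul hN.le, hexp]
    have hfq0 : (0:ℝ) ≤ (∫ y : EuclideanSpace ℝ (Fin d), ‖f y‖ ^ q) ^ (1/q) :=
      Real.rpow_nonneg (integral_nonneg fun y => Real.rpow_nonneg (norm_nonneg _) _) _
    calc ‖f x‖ = ‖∫ y, f y • g0 y‖ := by rw [representation N hN f hsupp x]
      _ ≤ ∫ y, ‖f y • g0 y‖ := norm_integral_le_integral_norm _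
      _ = ∫ y, ‖f y‖ * ‖g0 y‖ := by simp_rw [smul_eq_mul, norm_mul]
      _ ≤ (∫ y, ‖f y‖ ^ q) ^ (1/q) * (∫ y, ‖g0 y‖ ^ p) ^ (1/p) := holder
      _ = (∫ y, ‖f y‖ ^ q) ^ (1/q) * (N ^ ((d:ℝ)/q) * Iψ ^ (1/p)) := by rw [hA, hrpow]
      _ ≤ (Iψ ^ (1/p) + 1) * N ^ ((d:ℝ)/q) * (∫ y, ‖f y‖ ^ q) ^ (1/q) := by
          have h2 : (0:ℝ) ≤ N ^ ((d:ℝ)/q) := Real.rpow_nonneg hN.le _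
          nlinarith [Real.rpow_nonneg hIψ0 (1/p)]
end

section
/- (Stein–Weiss kernel lemma.) Let 1 < q < ∞ and 0 < s < d − d/q. Define, for a measurable function g on ℝ^d, Ug(x) = |x|^{s−d} ∫_{{|y| ≤ |x|/2}} |g(y)| |y|^{−s} dy. Then there is a constant C = C(d,s,q) such that ∫_{ℝ^d} |Ug(x)|^q dx ≤ C ∫_{ℝ^d} |g(x)|^q dx for every g ∈ L^q(ℝ^d). -/
open MeasureTheory Real Set
open scoped ENNReal NNReal Pointwise

section swaux

variable {E : Type*} [NormedAddCommGroup E] [NormedSpace ℝ E] [MeasurableSpace E] [BorelSpace E]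
  [FiniteDimensional ℝ E] (μ : Measure E) [μ.IsAddHaarMeasure]

lemma sw_lintegral_comp_smul (f : E → ℝ≥0∞) {R : ℝ} (hR : R ≠ 0) :
    ∫⁻ x, f (R • x) ∂μ
      = ENNReal.ofReal |(R ^ Module.finrank ℝ E)⁻¹| * ∫⁻ x, f x ∂μ := by
  have h1 : ∫⁻ x, f (R • x) ∂μ
      = ∫⁻ y, f y ∂(Measure.map (fun x : E => R • x) μ) := by
    rw [show Measure.map (fun x : E => R • x) μ
        = Measure.map ((Homeomorph.smul (Units.mk0 R hR)).toMeasurableEquiv) μ from rfl]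
    rw [MeasureTheory.lintegral_map_equiv]
    rfl
  rw [h1, Measure.map_addHaar_smul μ hR, lintegral_smul_measure, smul_eq_mul]

lemma sw_lintegral_rpow_smul_set (c : ℝ) {T : Set E} (hT : MeasurableSet T) {R : ℝ}
    (hR : 0 < R) :
    ∫⁻ x in R • T, (‖x‖₊ : ℝ≥0∞) ^ c ∂μ
      = ENNReal.ofReal (R ^ ((Module.finrank ℝ E : ℝ) + c))
          * ∫⁻ x in T, (‖x‖₊ : ℝ≥0∞) ^ c ∂μ := by
  have hR' : R ≠ 0 := hR.ne'
  set n := Module.finrank ℝ E with hn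
  have hTm : MeasurableSet (R • T) := by
    have : R • T = (fun x : E => R⁻¹ • x) ⁻¹' T := by
      ext x
      simp [mem_smul_set_iff_inv_smul_mem₀ hR']
    rw [this]
    exact (measurable_const_smul R⁻¹) hT
  have key := sw_lintegral_comp_smul μ ((R • T).indicator fun x => (‖x‖₊ : ℝ≥0∞) ^ c) hR'
  have h2 : ∀ x : E, ((R • T).indicator fun x => (‖x‖₊ : ℝ≥0∞) ^ c) (R • x)
      = T.indicator (fun y => ((‖R‖₊ : ℝ≥0∞) * (‖y‖₊ : ℝ≥0∞)) ^ c) x := by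
    intro x
    have hmem : R • x ∈ R • T ↔ x ∈ T := smul_mem_smul_set_iff₀ hR' T x
    by_cases hx : x ∈ T
    · rw [indicator_of_mem (hmem.2 hx), indicator_of_mem hx, nnnorm_smul]
      push_cast
      ring_nf
    · rw [indicator_of_notMem (fun h => hx (hmem.1 h)), indicator_of_notMem hx]
  have h4 : ∫⁻ x, ((R • T).indicator fun x => (‖x‖₊ : ℝ≥0∞) ^ c) (R • x) ∂μ
      = (‖R‖₊ : ℝ≥0∞) ^ c * ∫⁻ x in T, (‖x‖₊ : ℝ≥0∞) ^ c ∂μ := by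
    simp_rw [h2, fun x : E => ENNReal.mul_rpow_of_ne_top (ENNReal.coe_ne_top (r := ‖R‖₊))
      (ENNReal.coe_ne_top (r := ‖x‖₊)) c]
    rw [← lintegral_indicator hT _, ← lintegral_const_mul _
      ((measurable_nnnorm.coe_nnreal_ennreal.pow_const c).indicator hT)]
    congr 1
    ext x
    by_cases hx : x ∈ T <;> simp [hx]
  have key2 : ∫⁻ x in R • T, (‖x‖₊ : ℝ≥0∞) ^ c ∂μ
      = ENNReal.ofReal (R ^ n) * ((‖R‖₊ : ℝ≥0∞) ^ c * ∫⁻ x in T, (‖x‖₊ : ℝ≥0∞) ^ c ∂μ) := by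
    rw [← h4, key, lintegral_indicator hTm _, ← mul_assoc]
    have hone : ENNReal.ofReal (R ^ n) * ENNReal.ofReal |(R ^ n)⁻¹| = 1 := by
      rw [abs_of_pos (by positivity), ← ENNReal.ofReal_mul (by positivity),
        mul_inv_cancel₀ (by positivity), ENNReal.ofReal_one]
    rw [hone, one_mul]
  rw [key2, (id (Real.enorm_eq_ofReal hR.le) : (‖R‖₊ : ℝ≥0∞) = _), ENNReal.ofReal_rpow_of_pos hR, ← mul_assoc,
    ← ENNReal.ofReal_mul (by positivity), ← Real.rpow_natCast R n, ← Real.rpow_add hR]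

lemma sw_finite_near_zero [Nontrivial E] {a : ℝ} (ha : 0 < a)
    (had : a < (Module.finrank ℝ E : ℝ)) :
    ∫⁻ x in {x : E | ‖x‖ ≤ 1}, (‖x‖₊ : ℝ≥0∞) ^ (-a) ∂μ < ⊤ := by
  classical
  set n := Module.finrank ℝ E with hn
  set V := μ (Metric.ball (0 : E) 1) with hVdef
  have hV : V ≠ ⊤ := measure_ball_lt_top.ne
  have hr0 : (0:ℝ) < 2⁻¹ := by norm_num
  have hr1 : (2⁻¹:ℝ) < 1 := by norm_num
  set Sh : ℕ → Set E := fun k => {x : E | (2⁻¹:ℝ) ^ (k+1) < ‖x‖ ∧ ‖x‖ ≤ (2⁻¹:ℝ) ^ k} with hSh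
  have hsub : {x : E | ‖x‖ ≤ 1} ⊆ {(0:E)} ∪ ⋃ k, Sh k := by
    intro x hx
    have hx1 : ‖x‖ ≤ 1 := hx
    rcases eq_or_ne x 0 with h0 | h0
    · exact Or.inl (by simp [h0])
    · right
      have hx0 : 0 < ‖x‖ := norm_pos_iff.2 h0
      have hex : ∃ m : ℕ, (2⁻¹:ℝ) ^ m < ‖x‖ := exists_pow_lt_of_lt_one hx0 hr1
      have hm0 : Nat.find hex ≠ 0 := by
        intro h
        have h2 := Nat.find_spec hex
        rw [h, pow_zero] at h2
        exact absurd hx1 (not_le.2 h2)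
      obtain ⟨k, hk⟩ := Nat.exists_eq_succ_of_ne_zero hm0
      refine mem_iUnion.2 ⟨k, ?_, ?_⟩
      · have h2 := Nat.find_spec hex
        rwa [hk] at h2
      · exact not_lt.1 (Nat.find_min hex (by omega))
  have hShm : ∀ k, MeasurableSet (Sh k) := by
    intro k
    exact measurable_norm measurableSet_Ioc
  have hbound : ∀ k, ∫⁻ x in Sh k, (‖x‖₊ : ℝ≥0∞) ^ (-a) ∂μ
      ≤ ENNReal.ofReal (((2⁻¹:ℝ) ^ (k+1)) ^ (-a) * ((2⁻¹:ℝ) ^ k) ^ n) * V := by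
    intro k
    calc ∫⁻ x in Sh k, (‖x‖₊ : ℝ≥0∞) ^ (-a) ∂μ
        ≤ ∫⁻ _x in Sh k, ENNReal.ofReal (((2⁻¹:ℝ) ^ (k+1)) ^ (-a)) ∂μ := by
          refine setLIntegral_mono' (hShm k) fun x hx => ?_
          have hx1 : (2⁻¹:ℝ) ^ (k+1) < ‖x‖ := hx.1
          have hx0 : 0 < ‖x‖ := lt_trans (by positivity) hx1
          rw [← (id (ofReal_norm x) : ENNReal.ofReal ‖x‖ = (‖x‖₊ : ℝ≥0∞)), ENNReal.ofReal_rpow_of_pos hx0]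
          exact ENNReal.ofReal_le_ofReal
            (Real.rpow_le_rpow_of_nonpos (by positivity) hx1.le (by linarith))
      _ = ENNReal.ofReal (((2⁻¹:ℝ) ^ (k+1)) ^ (-a)) * μ (Sh k) := setLIntegral_const _ _
      _ ≤ ENNReal.ofReal (((2⁻¹:ℝ) ^ (k+1)) ^ (-a))
            * (ENNReal.ofReal (((2⁻¹:ℝ) ^ k) ^ n) * V) := by
          gcongr
          calc μ (Sh k) ≤ μ (Metric.closedBall 0 ((2⁻¹:ℝ) ^ k)) := by
                refine measure_mono fun x hx => ?_
                simpa [mem_closedBall_zero_iff] using hx.2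
            _ = ENNReal.ofReal (((2⁻¹:ℝ) ^ k) ^ n) * V := Measure.addHaar_closedBall μ 0 (by positivity)
      _ = ENNReal.ofReal (((2⁻¹:ℝ) ^ (k+1)) ^ (-a) * ((2⁻¹:ℝ) ^ k) ^ n) * V := by
          rw [← mul_assoc, ← ENNReal.ofReal_mul (by positivity)]
  have hgeom : ∀ k : ℕ, ((2⁻¹:ℝ) ^ (k+1)) ^ (-a) * ((2⁻¹:ℝ) ^ k) ^ n
      = (2⁻¹:ℝ) ^ (-a) * ((2⁻¹:ℝ) ^ ((n:ℝ) - a)) ^ k := by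
    intro k
    have e1 : ((2⁻¹:ℝ) ^ (k+1)) ^ (-a) = (2⁻¹:ℝ) ^ ((((k:ℝ))+1) * (-a)) := by
      rw [← Real.rpow_natCast (2⁻¹:ℝ) (k+1), ← Real.rpow_mul hr0.le]
      push_cast
      ring_nf
    have e2 : ((2⁻¹:ℝ) ^ k) ^ n = (2⁻¹:ℝ) ^ ((k:ℝ) * (n:ℝ)) := by
      rw [← Real.rpow_natCast (2⁻¹:ℝ) k, ← Real.rpow_natCast ((2⁻¹:ℝ) ^ ((k:ℝ))) n,
        ← Real.rpow_mul hr0.le]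
    have e3 : (((2⁻¹:ℝ) ^ ((n:ℝ) - a)) ^ k) = (2⁻¹:ℝ) ^ (((n:ℝ) - a) * (k:ℝ)) := by
      rw [← Real.rpow_natCast ((2⁻¹:ℝ) ^ ((n:ℝ) - a)) k, ← Real.rpow_mul hr0.le]
    rw [e1, e2, e3, ← Real.rpow_add hr0, ← Real.rpow_add hr0]
    congr 1
    ring
  have hsum : Summable (fun k : ℕ => (2⁻¹:ℝ) ^ (-a) * ((2⁻¹:ℝ) ^ ((n:ℝ) - a)) ^ k) :=
    (summable_geometric_of_lt_one (Real.rpow_nonneg hr0.le _)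
      (Real.rpow_lt_one hr0.le hr1 (by linarith))).mul_left _
  have hsum2 : Summable (fun k : ℕ => ((2⁻¹:ℝ) ^ (k+1)) ^ (-a) * ((2⁻¹:ℝ) ^ k) ^ n) := by
    simpa only [hgeom] using hsum
  calc ∫⁻ x in {x : E | ‖x‖ ≤ 1}, (‖x‖₊ : ℝ≥0∞) ^ (-a) ∂μ
      ≤ ∫⁻ x in {(0:E)} ∪ ⋃ k, Sh k, (‖x‖₊ : ℝ≥0∞) ^ (-a) ∂μ := lintegral_mono_set hsub
    _ ≤ ∫⁻ x in {(0:E)}, (‖x‖₊ : ℝ≥0∞) ^ (-a) ∂μ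
          + ∫⁻ x in ⋃ k, Sh k, (‖x‖₊ : ℝ≥0∞) ^ (-a) ∂μ := lintegral_union_le _ _ _
    _ = ∫⁻ x in ⋃ k, Sh k, (‖x‖₊ : ℝ≥0∞) ^ (-a) ∂μ := by
        rw [setLIntegral_measure_zero _ _ (measure_singleton 0), zero_add]
    _ ≤ ∑' k, ∫⁻ x in Sh k, (‖x‖₊ : ℝ≥0∞) ^ (-a) ∂μ := lintegral_iUnion_le _ _
    _ ≤ ∑' k, ENNReal.ofReal (((2⁻¹:ℝ) ^ (k+1)) ^ (-a) * ((2⁻¹:ℝ) ^ k) ^ n) * V :=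
        ENNReal.tsum_le_tsum hbound
    _ = ENNReal.ofReal (∑' k, ((2⁻¹:ℝ) ^ (k+1)) ^ (-a) * ((2⁻¹:ℝ) ^ k) ^ n) * V := by
        rw [ENNReal.tsum_mul_right,
          ENNReal.ofReal_tsum_of_nonneg (fun k => by positivity) hsum2]
    _ < ⊤ := ENNReal.mul_lt_top ENNReal.ofReal_lt_top hV.lt_top

lemma sw_finite_at_infty {b : ℝ} (hb : (Module.finrank ℝ E : ℝ) < b) :
    ∫⁻ x in {x : E | 1 ≤ ‖x‖}, (‖x‖₊ : ℝ≥0∞) ^ (-b) ∂μ < ⊤ := by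
  classical
  set n := Module.finrank ℝ E with hn
  set V := μ (Metric.ball (0 : E) 1) with hVdef
  have hV : V ≠ ⊤ := measure_ball_lt_top.ne
  have hb0 : 0 < b := lt_of_le_of_lt (Nat.cast_nonneg n) hb
  set Sh : ℕ → Set E := fun k => {x : E | (2:ℝ) ^ k ≤ ‖x‖ ∧ ‖x‖ < (2:ℝ) ^ (k+1)} with hSh
  have hsub : {x : E | 1 ≤ ‖x‖} ⊆ ⋃ k, Sh k := by
    intro x hx
    have hx1 : 1 ≤ ‖x‖ := hx
    have hex : ∃ m : ℕ, ‖x‖ < (2:ℝ) ^ m := pow_unbounded_of_one_lt ‖x‖ one_lt_two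
    have hm0 : Nat.find hex ≠ 0 := by
      intro h
      have h2 := Nat.find_spec hex
      rw [h, pow_zero] at h2
      exact absurd hx1 (not_le.2 h2)
    obtain ⟨k, hk⟩ := Nat.exists_eq_succ_of_ne_zero hm0
    refine mem_iUnion.2 ⟨k, ?_, ?_⟩
    · exact not_lt.1 (Nat.find_min hex (by omega))
    · have h2 := Nat.find_spec hex
      rwa [hk] at h2
  have hShm : ∀ k, MeasurableSet (Sh k) := fun k => measurable_norm measurableSet_Ico
  have hbound : ∀ k, ∫⁻ x in Sh k, (‖x‖₊ : ℝ≥0∞) ^ (-b) ∂μ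
      ≤ ENNReal.ofReal (((2:ℝ) ^ k) ^ (-b) * ((2:ℝ) ^ (k+1)) ^ n) * V := by
    intro k
    calc ∫⁻ x in Sh k, (‖x‖₊ : ℝ≥0∞) ^ (-b) ∂μ
        ≤ ∫⁻ _x in Sh k, ENNReal.ofReal (((2:ℝ) ^ k) ^ (-b)) ∂μ := by
          refine setLIntegral_mono' (hShm k) fun x hx => ?_
          have hx1 : (2:ℝ) ^ k ≤ ‖x‖ := hx.1
          have hx0 : 0 < ‖x‖ := lt_of_lt_of_le (by positivity) hx1
          rw [← (id (ofReal_norm x) : ENNReal.ofReal ‖x‖ = (‖x‖₊ : ℝ≥0∞)), ENNReal.ofReal_rpow_of_pos hx0]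
          exact ENNReal.ofReal_le_ofReal
            (Real.rpow_le_rpow_of_nonpos (by positivity) hx1 (by linarith))
      _ = ENNReal.ofReal (((2:ℝ) ^ k) ^ (-b)) * μ (Sh k) := setLIntegral_const _ _
      _ ≤ ENNReal.ofReal (((2:ℝ) ^ k) ^ (-b))
            * (ENNReal.ofReal (((2:ℝ) ^ (k+1)) ^ n) * V) := by
          gcongr
          calc μ (Sh k) ≤ μ (Metric.closedBall 0 ((2:ℝ) ^ (k+1))) := by
                refine measure_mono fun x hx => ?_
                simpa [mem_closedBall_zero_iff] using hx.2.le
            _ = ENNReal.ofReal (((2:ℝ) ^ (k+1)) ^ n) * V :=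
                Measure.addHaar_closedBall μ 0 (by positivity)
      _ = ENNReal.ofReal (((2:ℝ) ^ k) ^ (-b) * ((2:ℝ) ^ (k+1)) ^ n) * V := by
          rw [← mul_assoc, ← ENNReal.ofReal_mul (by positivity)]
  have h20 : (0:ℝ) < 2 := by norm_num
  have hgeom : ∀ k : ℕ, ((2:ℝ) ^ k) ^ (-b) * ((2:ℝ) ^ (k+1)) ^ n
      = (2:ℝ) ^ (n:ℝ) * ((2:ℝ) ^ ((n:ℝ) - b)) ^ k := by
    intro k
    have e1 : ((2:ℝ) ^ k) ^ (-b) = (2:ℝ) ^ ((k:ℝ) * (-b)) := by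
      rw [← Real.rpow_natCast (2:ℝ) k, ← Real.rpow_mul h20.le]
    have e2 : ((2:ℝ) ^ (k+1)) ^ n = (2:ℝ) ^ (((k:ℝ)+1) * (n:ℝ)) := by
      rw [← Real.rpow_natCast (2:ℝ) (k+1), ← Real.rpow_natCast ((2:ℝ) ^ (((k:ℕ)+1 : ℕ):ℝ)) n,
        ← Real.rpow_mul h20.le]
      push_cast
      ring_nf
    have e3 : (((2:ℝ) ^ ((n:ℝ) - b)) ^ k) = (2:ℝ) ^ (((n:ℝ) - b) * (k:ℝ)) := by
      rw [← Real.rpow_natCast ((2:ℝ) ^ ((n:ℝ) - b)) k, ← Real.rpow_mul h20.le]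
    rw [e1, e2, e3, ← Real.rpow_add h20, ← Real.rpow_add h20]
    congr 1
    ring
  have hsum : Summable (fun k : ℕ => (2:ℝ) ^ (n:ℝ) * ((2:ℝ) ^ ((n:ℝ) - b)) ^ k) :=
    (summable_geometric_of_lt_one (Real.rpow_nonneg h20.le _)
      (Real.rpow_lt_one_of_one_lt_of_neg one_lt_two (by linarith))).mul_left _
  have hsum2 : Summable (fun k : ℕ => ((2:ℝ) ^ k) ^ (-b) * ((2:ℝ) ^ (k+1)) ^ n) := by
    simpa only [hgeom] using hsum
  calc ∫⁻ x in {x : E | 1 ≤ ‖x‖}, (‖x‖₊ : ℝ≥0∞) ^ (-b) ∂μ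
      ≤ ∫⁻ x in ⋃ k, Sh k, (‖x‖₊ : ℝ≥0∞) ^ (-b) ∂μ := lintegral_mono_set hsub
    _ ≤ ∑' k, ∫⁻ x in Sh k, (‖x‖₊ : ℝ≥0∞) ^ (-b) ∂μ := lintegral_iUnion_le _ _
    _ ≤ ∑' k, ENNReal.ofReal (((2:ℝ) ^ k) ^ (-b) * ((2:ℝ) ^ (k+1)) ^ n) * V :=
        ENNReal.tsum_le_tsum hbound
    _ = ENNReal.ofReal (∑' k, ((2:ℝ) ^ k) ^ (-b) * ((2:ℝ) ^ (k+1)) ^ n) * V := by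
        rw [ENNReal.tsum_mul_right,
          ENNReal.ofReal_tsum_of_nonneg (fun k => by positivity) hsum2]
    _ < ⊤ := ENNReal.mul_lt_top ENNReal.ofReal_lt_top hV.lt_top

end swaux

/-- Stein–Weiss kernel lemma: for `1 < q < ∞` and `0 < s < d - d/q`, the operator
`Ug(x) = |x|^{s-d} ∫_{|y| ≤ |x|/2} |g(y)| |y|^{-s} dy` is bounded on `L^q(ℝ^d)`. -/
theorem stein_weiss_kernel_lemma (d : ℕ) (q s : ℝ) (hq : 1 < q) (hs : 0 < s)
    (hsd : s < (d : ℝ) - (d : ℝ) / q) :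
    ∃ C : ℝ, 0 < C ∧ ∀ g : EuclideanSpace ℝ (Fin d) → ℝ,
      MeasureTheory.MemLp g (ENNReal.ofReal q) volume →
      ∫⁻ x : EuclideanSpace ℝ (Fin d),
          ((‖x‖₊ : ℝ≥0∞) ^ (s - (d : ℝ)) *
            ∫⁻ y in {y : EuclideanSpace ℝ (Fin d) | ‖y‖ ≤ ‖x‖ / 2},
              (‖g y‖₊ : ℝ≥0∞) * (‖y‖₊ : ℝ≥0∞) ^ (-s)) ^ q ≤
        ENNReal.ofReal C * ∫⁻ x : EuclideanSpace ℝ (Fin d), (‖g x‖₊ : ℝ≥0∞) ^ q := by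
  classical
  have hq0 : (0:ℝ) < q := lt_trans one_pos hq
  have hqne : q ≠ 0 := hq0.ne'
  have hq1 : (0:ℝ) < q - 1 := by linarith
  have hd : 0 < d := by
    by_contra h
    push_neg at h
    interval_cases d
    · simp at hsd; linarith
  have hdr : (0:ℝ) < (d:ℝ) := by exact_mod_cast hd
  haveI : Nontrivial (EuclideanSpace ℝ (Fin d)) := by
    refine nontrivial_of_ne (EuclideanSpace.single ⟨0, hd⟩ (1:ℝ)) 0 fun h => ?_
    have := congrArg (fun v : EuclideanSpace ℝ (Fin d) => v ⟨0, hd⟩) h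
    simp [EuclideanSpace.single_apply] at this
  set E := EuclideanSpace ℝ (Fin d) with hE
  have hfr : (Module.finrank ℝ E : ℝ) = (d:ℝ) := by
    exact_mod_cast congrArg Nat.cast
      (finrank_euclideanSpace_fin : Module.finrank ℝ (EuclideanSpace ℝ (Fin d)) = d)
  -- conjugate exponent
  set p : ℝ := q / (q - 1) with hp
  have hpq : p.HolderConjugate q := (Real.HolderConjugate.conjExponent hq).symm
  have hpne : p ≠ 0 := hpq.ne_zero
  -- exponents
  set a : ℝ := s + (d:ℝ)/q with ha'
  have ha : 0 < a := by positivity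
  have had : a < (d:ℝ) := by
    rw [ha']
    have : (d:ℝ)/q ≥ 0 := by positivity
    linarith
  set b0 : ℝ := (d:ℝ) - (d:ℝ)/q - s with hb0'
  have hb0 : 0 < b0 := by rw [hb0']; linarith
  -- arithmetic identities
  have harith1 : (-a)/p + b0/q = -s := by
    rw [ha', hb0', hp]
    field_simp
    ring
  have harith2 : (-a)/p * p = -a := by field_simp
  have harith3 : b0/q * q = b0 := by field_simp
  have harith4 : 1/p * q = q - 1 := by
    rw [hp]
    field_simp
  have harith5 : (s - (d:ℝ)) * q + b0 * (q - 1) = -(b0 + (d:ℝ)) := by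
    rw [hb0']
    field_simp
    ring
  have harith6 : (d:ℝ) - a = b0 := by rw [ha', hb0']; ring
  have hbinf : (Module.finrank ℝ E : ℝ) < b0 + (d:ℝ) := by rw [hfr]; linarith
  -- the two radial integrals
  set A : ℝ≥0∞ := ∫⁻ y in {y : E | ‖y‖ ≤ 1}, (‖y‖₊ : ℝ≥0∞) ^ (-a) with hA'
  have hA : A ≠ ⊤ := by
    rw [hA']
    exact (sw_finite_near_zero volume ha (by rw [hfr]; exact had)).ne
  set B : ℝ≥0∞ := ∫⁻ x in {x : E | 1 ≤ ‖x‖}, (‖x‖₊ : ℝ≥0∞) ^ (-(b0 + (d:ℝ))) with hB'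
  have hB : B ≠ ⊤ := by
    rw [hB']
    exact (sw_finite_at_infty volume hbinf).ne
  -- scaling identities
  have hmeas_le1 : MeasurableSet {y : E | ‖y‖ ≤ 1} := measurable_norm measurableSet_Iic
  have hmeas_ge1 : MeasurableSet {y : E | 1 ≤ ‖y‖} := measurable_norm measurableSet_Ici
  have hball : ∀ R : ℝ, 0 < R →
      ∫⁻ y in {y : E | ‖y‖ ≤ R}, (‖y‖₊ : ℝ≥0∞) ^ (-a) = ENNReal.ofReal (R ^ ((d:ℝ) - a)) * A := by
    intro R hR
    have hset : {y : E | ‖y‖ ≤ R} = R • {y : E | ‖y‖ ≤ 1} := by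
      ext y
      rw [mem_smul_set_iff_inv_smul_mem₀ hR.ne']
      simp only [mem_setOf_eq, norm_smul, norm_inv, Real.norm_eq_abs, abs_of_pos hR]
      rw [inv_mul_le_iff₀ hR, mul_one]
    rw [hset, sw_lintegral_rpow_smul_set volume (-a) hmeas_le1 hR, hfr, hA']
    ring_nf
  have hcompl : ∀ R : ℝ, 0 < R →
      ∫⁻ x in {x : E | R ≤ ‖x‖}, (‖x‖₊ : ℝ≥0∞) ^ (-(b0 + (d:ℝ)))
        = ENNReal.ofReal (R ^ (-b0)) * B := by
    intro R hR
    have hset : {x : E | R ≤ ‖x‖} = R • {x : E | 1 ≤ ‖x‖} := by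
      ext x
      rw [mem_smul_set_iff_inv_smul_mem₀ hR.ne']
      simp only [mem_setOf_eq, norm_smul, norm_inv, Real.norm_eq_abs, abs_of_pos hR]
      rw [le_inv_mul_iff₀ hR, mul_one]
    rw [hset, sw_lintegral_rpow_smul_set volume (-(b0 + (d:ℝ))) hmeas_ge1 hR, hfr, hB']
    have : (d:ℝ) + -(b0 + (d:ℝ)) = -b0 := by ring
    rw [this]
  -- constants
  set K2 : ℝ≥0∞ := ENNReal.ofReal ((2:ℝ) ^ (-(b0 * (q - 1)))) * A ^ (q - 1) with hK2'
  have hK2top : K2 ≠ ⊤ :=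
    ENNReal.mul_ne_top ENNReal.ofReal_ne_top (ENNReal.rpow_lt_top_of_nonneg hq1.le hA).ne
  set K3 : ℝ≥0∞ := ENNReal.ofReal ((2:ℝ) ^ (-b0)) * B with hK3'
  have hK3top : K3 ≠ ⊤ := ENNReal.mul_ne_top ENNReal.ofReal_ne_top hB
  set K : ℝ≥0∞ := K2 * K3 with hK'
  have hKtop : K ≠ ⊤ := ENNReal.mul_ne_top hK2top hK3top
  refine ⟨K.toReal + 1, by positivity, ?_⟩
  have hKC : K ≤ ENNReal.ofReal (K.toReal + 1) := by
    conv_lhs => rw [← ENNReal.ofReal_toReal hKtop]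
    exact ENNReal.ofReal_le_ofReal (by linarith)
  intro g hg
  -- replace g by a measurable representative
  obtain ⟨g₀, hg₀m, hgg₀⟩ : ∃ g₀ : E → ℝ, Measurable g₀ ∧ g =ᵐ[volume] g₀ :=
    ⟨hg.1.aemeasurable.mk g, hg.1.aemeasurable.measurable_mk, hg.1.aemeasurable.ae_eq_mk⟩
  have hae : ∀ᵐ z : E ∂(volume : Measure E), z ≠ 0 := by
    rw [ae_iff]
    simp only [ne_eq, not_not, setOf_eq_eq_singleton]
    exact measure_singleton 0
  have hLHSeq : (∫⁻ x : E, ((‖x‖₊ : ℝ≥0∞) ^ (s - (d:ℝ)) *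
        ∫⁻ y in {y : E | ‖y‖ ≤ ‖x‖ / 2}, (‖g y‖₊ : ℝ≥0∞) * (‖y‖₊ : ℝ≥0∞) ^ (-s)) ^ q)
      = ∫⁻ x : E, ((‖x‖₊ : ℝ≥0∞) ^ (s - (d:ℝ)) *
        ∫⁻ y in {y : E | ‖y‖ ≤ ‖x‖ / 2}, (‖g₀ y‖₊ : ℝ≥0∞) * (‖y‖₊ : ℝ≥0∞) ^ (-s)) ^ q := by
    refine lintegral_congr fun x => ?_
    have hxeq : (∫⁻ y in {y : E | ‖y‖ ≤ ‖x‖ / 2}, (‖g y‖₊ : ℝ≥0∞) * (‖y‖₊ : ℝ≥0∞) ^ (-s))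
        = ∫⁻ y in {y : E | ‖y‖ ≤ ‖x‖ / 2}, (‖g₀ y‖₊ : ℝ≥0∞) * (‖y‖₊ : ℝ≥0∞) ^ (-s) :=
      lintegral_congr_ae (ae_restrict_of_ae (hgg₀.mono fun y hy => by simp only [hy]))
    rw [hxeq]
  have hRHSeq : (∫⁻ y : E, (‖g y‖₊ : ℝ≥0∞) ^ q) = ∫⁻ y : E, (‖g₀ y‖₊ : ℝ≥0∞) ^ q :=
    lintegral_congr_ae (hgg₀.mono fun y hy => by simp only [hy])
  rw [hLHSeq, hRHSeq]
  -- notation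
  set S : E → Set E := fun x => {y : E | ‖y‖ ≤ ‖x‖ / 2} with hS'
  have hSmeas : ∀ x, MeasurableSet (S x) := fun x => measurable_norm measurableSet_Iic
  set J : E → ℝ≥0∞ := fun x => ∫⁻ y in S x, (‖g₀ y‖₊ : ℝ≥0∞) ^ q * (‖y‖₊ : ℝ≥0∞) ^ b0 with hJ'
  have hinner_meas : Measurable fun y : E => (‖g₀ y‖₊ : ℝ≥0∞) ^ q * (‖y‖₊ : ℝ≥0∞) ^ b0 :=
    (hg₀m.nnnorm.coe_nnreal_ennreal.pow_const q).mul
      (measurable_nnnorm.coe_nnreal_ennreal.pow_const b0)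
  -- pointwise Hölder estimate
  have hmain : ∀ x : E, x ≠ 0 →
      ((‖x‖₊ : ℝ≥0∞) ^ (s - (d:ℝ)) *
          ∫⁻ y in S x, (‖g₀ y‖₊ : ℝ≥0∞) * (‖y‖₊ : ℝ≥0∞) ^ (-s)) ^ q
        ≤ K2 * ((‖x‖₊ : ℝ≥0∞) ^ (-(b0 + (d:ℝ))) * J x) := by
    intro x hx
    have hxn : 0 < ‖x‖ := norm_pos_iff.2 hx
    have hxnn : (‖x‖₊ : ℝ≥0∞) ≠ 0 := ENNReal.coe_ne_zero.2 (nnnorm_ne_zero_iff.2 hx)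
    have hR : (0:ℝ) < ‖x‖ / 2 := by positivity
    have hq2 : 1/q * q = 1 := by field_simp
    set X : ℝ≥0∞ := ENNReal.ofReal ((‖x‖ / 2) ^ ((d:ℝ) - a)) * A with hX'
    have hf1m : Measurable fun y : E => (‖y‖₊ : ℝ≥0∞) ^ ((-a)/p) :=
      measurable_nnnorm.coe_nnreal_ennreal.pow_const _
    have hf2m : Measurable fun y : E => (‖g₀ y‖₊ : ℝ≥0∞) * (‖y‖₊ : ℝ≥0∞) ^ (b0/q) :=
      hg₀m.nnnorm.coe_nnreal_ennreal.mul (measurable_nnnorm.coe_nnreal_ennreal.pow_const _)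
    have hcongr : (∫⁻ y in S x, (‖g₀ y‖₊ : ℝ≥0∞) * (‖y‖₊ : ℝ≥0∞) ^ (-s))
        = ∫⁻ y in S x, ((fun y : E => (‖y‖₊ : ℝ≥0∞) ^ ((-a)/p)) *
            (fun y : E => (‖g₀ y‖₊ : ℝ≥0∞) * (‖y‖₊ : ℝ≥0∞) ^ (b0/q))) y := by
      refine lintegral_congr_ae (ae_restrict_of_ae (hae.mono fun y hy => ?_))
      have hynn : (‖y‖₊ : ℝ≥0∞) ≠ 0 := ENNReal.coe_ne_zero.2 (nnnorm_ne_zero_iff.2 hy)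
      simp only [Pi.mul_apply]
      rw [← harith1, ENNReal.rpow_add _ _ hynn ENNReal.coe_ne_top]
      ring
    have hHold := ENNReal.lintegral_mul_le_Lp_mul_Lq ((volume : Measure E).restrict (S x))
      hpq hf1m.aemeasurable hf2m.aemeasurable
    have hf1int : (∫⁻ y in S x, ((‖y‖₊ : ℝ≥0∞) ^ ((-a)/p)) ^ p) = X := by
      have hpt : ∀ y : E, ((‖y‖₊ : ℝ≥0∞) ^ ((-a)/p)) ^ p = (‖y‖₊ : ℝ≥0∞) ^ (-a) := by
        intro y
        rw [← ENNReal.rpow_mul, harith2]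
      simp_rw [hpt]
      rw [hX']
      exact hball _ hR
    have hf2int : (∫⁻ y in S x, ((‖g₀ y‖₊ : ℝ≥0∞) * (‖y‖₊ : ℝ≥0∞) ^ (b0/q)) ^ q) = J x := by
      have hpt : ∀ y : E, ((‖g₀ y‖₊ : ℝ≥0∞) * (‖y‖₊ : ℝ≥0∞) ^ (b0/q)) ^ q
          = (‖g₀ y‖₊ : ℝ≥0∞) ^ q * (‖y‖₊ : ℝ≥0∞) ^ b0 := by
        intro y
        rw [ENNReal.mul_rpow_of_nonneg _ _ hq0.le, ← ENNReal.rpow_mul, harith3]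
      simp_rw [hpt]
      rfl
    have hIle : (∫⁻ y in S x, (‖g₀ y‖₊ : ℝ≥0∞) * (‖y‖₊ : ℝ≥0∞) ^ (-s))
        ≤ X ^ (1/p) * (J x) ^ (1/q) := by
      rw [hcongr, ← hf1int, ← hf2int]
      exact hHold
    have hXpow : X ^ (q-1) = (‖x‖₊:ℝ≥0∞) ^ (b0*(q-1))
        * ENNReal.ofReal ((2:ℝ) ^ (-(b0*(q-1)))) * A ^ (q-1) := by
      have hsplit2 : ((‖x‖/2 : ℝ)) ^ (b0*(q-1))
          = ‖x‖ ^ (b0*(q-1)) * (2:ℝ) ^ (-(b0*(q-1))) := by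
        rw [Real.div_rpow (norm_nonneg x) (by norm_num), Real.rpow_neg (by norm_num),
          div_eq_mul_inv]
      rw [hX', ENNReal.mul_rpow_of_nonneg _ _ hq1.le, ENNReal.ofReal_rpow_of_pos (by positivity),
        ← Real.rpow_mul hR.le, harith6, hsplit2, ENNReal.ofReal_mul (by positivity),
        ← ENNReal.ofReal_rpow_of_pos hxn, (id (ofReal_norm x) : ENNReal.ofReal ‖x‖ = (‖x‖₊ : ℝ≥0∞))]
    have hstep : ((‖x‖₊ : ℝ≥0∞) ^ (s - (d:ℝ)) * (X ^ (1/p) * (J x) ^ (1/q))) ^ q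
        = K2 * ((‖x‖₊ : ℝ≥0∞) ^ (-(b0 + (d:ℝ))) * J x) := by
      have hcomb : (‖x‖₊:ℝ≥0∞) ^ ((s - (d:ℝ))*q) * (‖x‖₊:ℝ≥0∞) ^ (b0*(q-1))
          = (‖x‖₊:ℝ≥0∞) ^ (-(b0 + (d:ℝ))) := by
        rw [← ENNReal.rpow_add _ _ hxnn ENNReal.coe_ne_top, harith5]
      calc ((‖x‖₊ : ℝ≥0∞) ^ (s - (d:ℝ)) * (X ^ (1/p) * (J x) ^ (1/q))) ^ q
          = (‖x‖₊ : ℝ≥0∞) ^ ((s - (d:ℝ))*q) * ((X ^ (1/p)) ^ q * ((J x) ^ (1/q)) ^ q) := by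
            rw [ENNReal.mul_rpow_of_nonneg _ _ hq0.le, ENNReal.mul_rpow_of_nonneg _ _ hq0.le,
              ← ENNReal.rpow_mul]
        _ = (‖x‖₊ : ℝ≥0∞) ^ ((s - (d:ℝ))*q) * (X ^ (q-1) * J x) := by
            rw [← ENNReal.rpow_mul X, ← ENNReal.rpow_mul (J x), harith4, hq2, ENNReal.rpow_one]
        _ = ((‖x‖₊:ℝ≥0∞) ^ ((s - (d:ℝ))*q) * (‖x‖₊:ℝ≥0∞) ^ (b0*(q-1)))
              * (ENNReal.ofReal ((2:ℝ) ^ (-(b0*(q-1)))) * A ^ (q-1) * J x) := by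
            rw [hXpow]
            ring
        _ = K2 * ((‖x‖₊ : ℝ≥0∞) ^ (-(b0 + (d:ℝ))) * J x) := by
            rw [hcomb, hK2']
            ring
    calc ((‖x‖₊ : ℝ≥0∞) ^ (s - (d:ℝ)) *
          ∫⁻ y in S x, (‖g₀ y‖₊ : ℝ≥0∞) * (‖y‖₊ : ℝ≥0∞) ^ (-s)) ^ q
        ≤ ((‖x‖₊ : ℝ≥0∞) ^ (s - (d:ℝ)) * (X ^ (1/p) * (J x) ^ (1/q))) ^ q :=
          ENNReal.rpow_le_rpow (mul_le_mul_right hIle _) hq0.le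
      _ = K2 * ((‖x‖₊ : ℝ≥0∞) ^ (-(b0 + (d:ℝ))) * J x) := hstep
  -- Tonelli
  have hswap : (∫⁻ x : E, (‖x‖₊ : ℝ≥0∞) ^ (-(b0 + (d:ℝ))) * J x)
      = K3 * ∫⁻ y : E, (‖g₀ y‖₊ : ℝ≥0∞) ^ q := by
    set c : ℝ := -(b0 + (d:ℝ)) with hc'
    set U : Set (E × E) := {z : E × E | ‖z.2‖ ≤ ‖z.1‖ / 2} with hU'
    have hU : MeasurableSet U :=
      (isClosed_le (continuous_norm.comp continuous_snd)
        ((continuous_norm.comp continuous_fst).div_const 2)).measurableSet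
    set F : E × E → ℝ≥0∞ := fun z =>
      (‖z.1‖₊ : ℝ≥0∞) ^ c * ((‖g₀ z.2‖₊ : ℝ≥0∞) ^ q * (‖z.2‖₊ : ℝ≥0∞) ^ b0) with hF'
    have hFm : Measurable F :=
      ((measurable_nnnorm.comp measurable_fst).coe_nnreal_ennreal.pow_const c).mul
        ((((hg₀m.comp measurable_snd).nnnorm).coe_nnreal_ennreal.pow_const q).mul
          ((measurable_nnnorm.comp measurable_snd).coe_nnreal_ennreal.pow_const b0))
    set H : E → E → ℝ≥0∞ := fun x y => U.indicator F (x, y) with hH'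
    have hHm : AEMeasurable (Function.uncurry H) ((volume : Measure E).prod volume) := by
      have huncurry : Function.uncurry H = U.indicator F := by
        ext z
        cases z
        rfl
      rw [huncurry]
      exact (hFm.indicator hU).aemeasurable
    have h5 : ∀ x : E, (∫⁻ y, H x y) = (‖x‖₊ : ℝ≥0∞) ^ c * J x := by
      intro x
      have hsec : ∀ y : E, H x y = (S x).indicator
          (fun y => (‖x‖₊ : ℝ≥0∞) ^ c * ((‖g₀ y‖₊ : ℝ≥0∞) ^ q * (‖y‖₊ : ℝ≥0∞) ^ b0)) y := by
        intro y
        simp only [hH']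
        by_cases hy : y ∈ S x
        · rw [Set.indicator_of_mem (show (x, y) ∈ U from hy),
            Set.indicator_of_mem hy]
        · rw [Set.indicator_of_notMem (show (x, y) ∉ U from hy),
            Set.indicator_of_notMem hy]
      simp_rw [hsec]
      rw [lintegral_indicator (hSmeas x) _, lintegral_const_mul _ hinner_meas]
    have h6 : ∀ y : E, y ≠ 0 → (∫⁻ x, H x y) = K3 * (‖g₀ y‖₊ : ℝ≥0∞) ^ q := by
      intro y hy
      have hyn : 0 < ‖y‖ := norm_pos_iff.2 hy
      have hyR : (0:ℝ) < ‖y‖ * 2 := by positivity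
      have hTm : MeasurableSet {x : E | ‖y‖ * 2 ≤ ‖x‖} := measurable_norm measurableSet_Ici
      have hsec : ∀ x : E, H x y = Set.indicator {x : E | ‖y‖ * 2 ≤ ‖x‖}
          (fun x => (‖x‖₊ : ℝ≥0∞) ^ c * ((‖g₀ y‖₊ : ℝ≥0∞) ^ q * (‖y‖₊ : ℝ≥0∞) ^ b0)) x := by
        intro x
        have hiff : (x, y) ∈ U ↔ x ∈ {x : E | ‖y‖ * 2 ≤ ‖x‖} := by
          simp only [hU', mem_setOf_eq]
          rw [le_div_iff₀ (by norm_num : (0:ℝ) < 2)]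
        simp only [hH']
        by_cases hx : x ∈ {x : E | ‖y‖ * 2 ≤ ‖x‖}
        · rw [Set.indicator_of_mem (hiff.2 hx), Set.indicator_of_mem hx]
        · rw [Set.indicator_of_notMem (fun h => hx (hiff.1 h)), Set.indicator_of_notMem hx]
      simp_rw [hsec]
      rw [lintegral_indicator hTm _,
        lintegral_mul_const _ (measurable_nnnorm.coe_nnreal_ennreal.pow_const c),
        hcompl (‖y‖ * 2) hyR]
      have hsplit : ENNReal.ofReal ((‖y‖ * 2) ^ (-b0))
          = (‖y‖₊ : ℝ≥0∞) ^ (-b0) * ENNReal.ofReal ((2:ℝ) ^ (-b0)) := by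
        rw [Real.mul_rpow (norm_nonneg y) (by norm_num), ENNReal.ofReal_mul (by positivity),
          ← (id (ofReal_norm y) : ENNReal.ofReal ‖y‖ = (‖y‖₊ : ℝ≥0∞)), ENNReal.ofReal_rpow_of_pos hyn]
      have hcan : (‖y‖₊ : ℝ≥0∞) ^ (-b0) * (‖y‖₊ : ℝ≥0∞) ^ b0 = 1 := by
        rw [← ENNReal.rpow_add _ _ (ENNReal.coe_ne_zero.2 (nnnorm_ne_zero_iff.2 hy))
          ENNReal.coe_ne_top, neg_add_cancel, ENNReal.rpow_zero]
      rw [hsplit, hK3']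
      calc ((‖y‖₊:ℝ≥0∞) ^ (-b0) * ENNReal.ofReal ((2:ℝ) ^ (-b0)) * B)
            * ((‖g₀ y‖₊:ℝ≥0∞) ^ q * (‖y‖₊:ℝ≥0∞) ^ b0)
          = ((‖y‖₊:ℝ≥0∞) ^ (-b0) * (‖y‖₊:ℝ≥0∞) ^ b0)
            * (ENNReal.ofReal ((2:ℝ) ^ (-b0)) * B * (‖g₀ y‖₊:ℝ≥0∞) ^ q) := by ring
        _ = ENNReal.ofReal ((2:ℝ) ^ (-b0)) * B * (‖g₀ y‖₊:ℝ≥0∞) ^ q := by rw [hcan, one_mul]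
    calc (∫⁻ x : E, (‖x‖₊ : ℝ≥0∞) ^ c * J x)
        = ∫⁻ x : E, ∫⁻ y, H x y := lintegral_congr fun x => (h5 x).symm
      _ = ∫⁻ y : E, ∫⁻ x, H x y := lintegral_lintegral_swap hHm
      _ = ∫⁻ y : E, K3 * (‖g₀ y‖₊ : ℝ≥0∞) ^ q :=
          lintegral_congr_ae (hae.mono fun y hy => h6 y hy)
      _ = K3 * ∫⁻ y : E, (‖g₀ y‖₊ : ℝ≥0∞) ^ q := lintegral_const_mul' _ _ hK3top
  calc (∫⁻ x : E, ((‖x‖₊ : ℝ≥0∞) ^ (s - (d:ℝ)) *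
        ∫⁻ y in S x, (‖g₀ y‖₊ : ℝ≥0∞) * (‖y‖₊ : ℝ≥0∞) ^ (-s)) ^ q)
      ≤ ∫⁻ x : E, K2 * ((‖x‖₊ : ℝ≥0∞) ^ (-(b0 + (d:ℝ))) * J x) :=
        lintegral_mono_ae (hae.mono fun x hx => hmain x hx)
    _ = K2 * ∫⁻ x : E, (‖x‖₊ : ℝ≥0∞) ^ (-(b0 + (d:ℝ))) * J x :=
        lintegral_const_mul' _ _ hK2top
    _ = K2 * (K3 * ∫⁻ y : E, (‖g₀ y‖₊ : ℝ≥0∞) ^ q) := by rw [hswap]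
    _ = K * ∫⁻ y : E, (‖g₀ y‖₊ : ℝ≥0∞) ^ q := by rw [hK', hK2', hK3']; ring
    _ ≤ ENNReal.ofReal (K.toReal + 1) * ∫⁻ y : E, (‖g₀ y‖₊ : ℝ≥0∞) ^ q := by gcongr
end

section
/- Let 1 < q < ∞ and 0 < s < d − d/q. Define, for a measurable function g on ℝ^d, S₂g(x) = ∫_{{|y| ≤ |x|/2}} |g(y)| / ( |y|^{s} |x−y|^{d−s} ) dy. Then there is a constant C = C(d,s,q) such that ∫_{ℝ^d} |S₂g(x)|^q dx ≤ C ∫_{ℝ^d} |g(x)|^q dx for every g ∈ L^q(ℝ^d). -/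
open MeasureTheory Real Set
open scoped ENNReal NNReal

lemma dyadic_calc (R β dd : ℝ) (hR : 0 < R) (k : ℕ) :
    (R / 2 ^ (k + 1)) ^ (-β) * (R / 2 ^ k) ^ dd
      = R ^ (dd - β) * (2 : ℝ) ^ β * ((2 : ℝ) ^ (β - dd)) ^ k := by
  have h2 : (0:ℝ) < 2 := two_pos
  have h1 : (0:ℝ) < R / 2 ^ (k + 1) := by positivity
  have h1' : (0:ℝ) < R / 2 ^ k := by positivity
  rw [Real.rpow_def_of_pos h1, Real.rpow_def_of_pos h1', Real.rpow_def_of_pos hR,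
    Real.rpow_def_of_pos h2, Real.rpow_def_of_pos h2, ← Real.exp_nat_mul, ← Real.exp_add,
    ← Real.exp_add, ← Real.exp_add]
  congr 1
  rw [Real.log_div hR.ne' (by positivity), Real.log_div hR.ne' (by positivity),
    Real.log_pow, Real.log_pow]
  push_cast
  ring

lemma ball_rpow_bound (d : ℕ) (hd : 0 < d) {β : ℝ} (hβ0 : 0 ≤ β) (hβd : β < d) :
    ∃ c : ℝ≥0∞, c ≠ ∞ ∧ ∀ R : ℝ, 0 < R →
      ∫⁻ y in {y : EuclideanSpace ℝ (Fin d) | ‖y‖ ≤ R}, (‖y‖₊ : ℝ≥0∞) ^ (-β) ≤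
        c * ENNReal.ofReal R ^ ((d : ℝ) - β) := by
  haveI : Nonempty (Fin d) := ⟨⟨0, hd⟩⟩
  set E := EuclideanSpace ℝ (Fin d)
  set V : ℝ≥0∞ := volume (Metric.closedBall (0 : E) 1) with hV
  have hVfin : V ≠ ∞ := measure_closedBall_lt_top.ne
  have hrpos : (0:ℝ) < (2:ℝ) ^ (β - (d:ℝ)) := Real.rpow_pos_of_pos two_pos _
  have hr1 : (2:ℝ) ^ (β - (d:ℝ)) < 1 :=
    Real.rpow_lt_one_of_one_lt_of_neg one_lt_two (by
      have : (0:ℝ) < d := by exact_mod_cast hd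
      linarith)
  have hsum : Summable (fun k : ℕ => (2:ℝ) ^ β * ((2:ℝ) ^ (β - (d:ℝ))) ^ k) :=
    (summable_geometric_of_lt_one hrpos.le hr1).mul_left _
  set U : ℝ := ∑' k : ℕ, (2:ℝ) ^ β * ((2:ℝ) ^ (β - (d:ℝ))) ^ k with hU
  refine ⟨ENNReal.ofReal U * V, ENNReal.mul_ne_top ENNReal.ofReal_ne_top hVfin, fun R hR => ?_⟩
  set A : ℕ → Set E := fun k => {y : E | R / 2 ^ (k+1) < ‖y‖ ∧ ‖y‖ ≤ R / 2 ^ k} with hA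
  have hAm : ∀ k, MeasurableSet (A k) := fun k =>
    measurable_norm measurableSet_Ioc
  have hcover : {y : E | ‖y‖ ≤ R} ⊆ {0} ∪ ⋃ k, A k := by
    intro y hy
    rcases eq_or_ne y 0 with rfl | hy0
    · exact Or.inl rfl
    have hny : 0 < ‖y‖ := norm_pos_iff.2 hy0
    have hex : ∃ k : ℕ, R / 2 ^ (k+1) < ‖y‖ := by
      obtain ⟨n, hn⟩ := pow_unbounded_of_one_lt (R / ‖y‖) one_lt_two
      rw [div_lt_iff₀ hny] at hn
      refine ⟨n, ?_⟩
      rw [div_lt_iff₀ (by positivity : (0:ℝ) < (2:ℝ) ^ (n+1))]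
      calc R < 2 ^ n * ‖y‖ := hn
        _ ≤ ‖y‖ * 2 ^ (n + 1) := by
            rw [pow_succ]
            nlinarith [pow_pos (zero_lt_two (α := ℝ)) n, hny]
    refine Or.inr (Set.mem_iUnion.2 ⟨Nat.find hex, Nat.find_spec hex, ?_⟩)
    cases h : Nat.find hex with
    | zero => simpa using hy
    | succ m =>
        have hm := Nat.find_min hex (by rw [h]; exact m.lt_succ_self)
        push_neg at hm
        simpa [h] using hm
  have hterm : ∀ k : ℕ, ∫⁻ y in A k, (‖y‖₊ : ℝ≥0∞) ^ (-β) ≤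
      ENNReal.ofReal ((R / 2 ^ (k+1)) ^ (-β) * (R / 2 ^ k) ^ (d:ℝ)) * V := by
    intro k
    have h1 : (0:ℝ) < R / 2 ^ (k+1) := by positivity
    have h2 : (0:ℝ) < R / 2 ^ k := by positivity
    have hpt : ∀ y ∈ A k, (‖y‖₊ : ℝ≥0∞) ^ (-β) ≤ ENNReal.ofReal ((R / 2 ^ (k+1)) ^ (-β)) := by
      intro y hyk
      rw [← ENNReal.ofReal_rpow_of_pos h1, ENNReal.rpow_neg, ENNReal.rpow_neg]
      refine ENNReal.inv_le_inv.2 (ENNReal.rpow_le_rpow ?_ hβ0)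
      rw [← enorm_eq_nnnorm, ← ofReal_norm]
      exact ENNReal.ofReal_le_ofReal hyk.1.le
    have hvol : volume (A k) ≤ ENNReal.ofReal ((R / 2 ^ k) ^ (d:ℝ)) * V := by
      have hsub : A k ⊆ Metric.closedBall (0 : E) (R / 2 ^ k) := fun y hyk =>
        mem_closedBall_zero_iff.2 hyk.2
      calc volume (A k) ≤ volume (Metric.closedBall (0 : E) (R / 2 ^ k)) := measure_mono hsub
        _ = ENNReal.ofReal ((R / 2 ^ k) ^ (d:ℝ)) * V := by
            rw [MeasureTheory.Measure.addHaar_closedBall' volume _ h2.le, ← hV,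
              finrank_euclideanSpace_fin, ← Real.rpow_natCast]
    calc ∫⁻ y in A k, (‖y‖₊ : ℝ≥0∞) ^ (-β)
        ≤ ∫⁻ _ in A k, ENNReal.ofReal ((R / 2 ^ (k+1)) ^ (-β)) := setLIntegral_mono' (hAm k) hpt
      _ = ENNReal.ofReal ((R / 2 ^ (k+1)) ^ (-β)) * volume (A k) := setLIntegral_const _ _
      _ ≤ ENNReal.ofReal ((R / 2 ^ (k+1)) ^ (-β)) * (ENNReal.ofReal ((R / 2 ^ k) ^ (d:ℝ)) * V) :=
          mul_le_mul_right hvol _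
      _ = ENNReal.ofReal ((R / 2 ^ (k+1)) ^ (-β) * (R / 2 ^ k) ^ (d:ℝ)) * V := by
          rw [ENNReal.ofReal_mul (by positivity), mul_assoc]
  calc ∫⁻ y in {y : E | ‖y‖ ≤ R}, (‖y‖₊ : ℝ≥0∞) ^ (-β)
      ≤ ∫⁻ y in ({0} ∪ ⋃ k, A k : Set E), (‖y‖₊ : ℝ≥0∞) ^ (-β) := lintegral_mono_set hcover
    _ ≤ (∫⁻ y in ({0} : Set E), (‖y‖₊ : ℝ≥0∞) ^ (-β)) +
        ∫⁻ y in ⋃ k, A k, (‖y‖₊ : ℝ≥0∞) ^ (-β) := lintegral_union_le _ _ _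
    _ = ∫⁻ y in ⋃ k, A k, (‖y‖₊ : ℝ≥0∞) ^ (-β) := by
        rw [setLIntegral_measure_zero _ _ (measure_singleton 0), zero_add]
    _ ≤ ∑' k, ∫⁻ y in A k, (‖y‖₊ : ℝ≥0∞) ^ (-β) := lintegral_iUnion_le _ _
    _ ≤ ∑' k, ENNReal.ofReal ((R / 2 ^ (k+1)) ^ (-β) * (R / 2 ^ k) ^ (d:ℝ)) * V :=
        ENNReal.tsum_le_tsum hterm
    _ = ENNReal.ofReal U * V * ENNReal.ofReal R ^ ((d:ℝ) - β) := by
        rw [ENNReal.tsum_mul_right]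
        have : ∀ k : ℕ, ENNReal.ofReal ((R / 2 ^ (k+1)) ^ (-β) * (R / 2 ^ k) ^ (d:ℝ)) =
            ENNReal.ofReal R ^ ((d:ℝ) - β) *
              ENNReal.ofReal ((2:ℝ) ^ β * ((2:ℝ) ^ (β - (d:ℝ))) ^ k) := by
          intro k
          rw [dyadic_calc R β (d:ℝ) hR k, mul_assoc,
            ENNReal.ofReal_mul (Real.rpow_nonneg hR.le _), ENNReal.ofReal_rpow_of_pos hR]
        simp_rw [this]
        rw [ENNReal.tsum_mul_left, ← ENNReal.ofReal_tsum_of_nonneg (fun k => by positivity) hsum,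
          ← hU]
        ring

lemma dyadic_calc2 (R γ dd : ℝ) (hR : 0 < R) (k : ℕ) :
    (R * 2 ^ k) ^ (-γ) * (R * 2 ^ (k+1)) ^ dd
      = R ^ (dd - γ) * (2 : ℝ) ^ dd * ((2 : ℝ) ^ (dd - γ)) ^ k := by
  have h2 : (0:ℝ) < 2 := two_pos
  have h1 : (0:ℝ) < R * 2 ^ k := by positivity
  have h1' : (0:ℝ) < R * 2 ^ (k+1) := by positivity
  rw [Real.rpow_def_of_pos h1, Real.rpow_def_of_pos h1', Real.rpow_def_of_pos hR,
    Real.rpow_def_of_pos h2, Real.rpow_def_of_pos h2, ← Real.exp_nat_mul, ← Real.exp_add,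
    ← Real.exp_add, ← Real.exp_add]
  congr 1
  rw [Real.log_mul hR.ne' (by positivity), Real.log_mul hR.ne' (by positivity),
    Real.log_pow, Real.log_pow]
  push_cast
  ring

lemma tail_rpow_bound (d : ℕ) (hd : 0 < d) {γ : ℝ} (hγ : (d:ℝ) < γ) :
    ∃ c : ℝ≥0∞, c ≠ ∞ ∧ ∀ R : ℝ, 0 < R →
      ∫⁻ x in {x : EuclideanSpace ℝ (Fin d) | R ≤ ‖x‖}, (‖x‖₊ : ℝ≥0∞) ^ (-γ) ≤
        c * ENNReal.ofReal R ^ ((d : ℝ) - γ) := by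
  haveI : Nonempty (Fin d) := ⟨⟨0, hd⟩⟩
  have hγ0 : 0 ≤ γ := le_of_lt (lt_of_le_of_lt (Nat.cast_nonneg d) hγ)
  set E := EuclideanSpace ℝ (Fin d)
  set V : ℝ≥0∞ := volume (Metric.closedBall (0 : E) 1) with hV
  have hVfin : V ≠ ∞ := measure_closedBall_lt_top.ne
  have hrpos : (0:ℝ) < (2:ℝ) ^ ((d:ℝ) - γ) := Real.rpow_pos_of_pos two_pos _
  have hr1 : (2:ℝ) ^ ((d:ℝ) - γ) < 1 :=
    Real.rpow_lt_one_of_one_lt_of_neg one_lt_two (by linarith)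
  have hsum : Summable (fun k : ℕ => (2:ℝ) ^ (d:ℝ) * ((2:ℝ) ^ ((d:ℝ) - γ)) ^ k) :=
    (summable_geometric_of_lt_one hrpos.le hr1).mul_left _
  set U : ℝ := ∑' k : ℕ, (2:ℝ) ^ (d:ℝ) * ((2:ℝ) ^ ((d:ℝ) - γ)) ^ k with hU
  refine ⟨ENNReal.ofReal U * V, ENNReal.mul_ne_top ENNReal.ofReal_ne_top hVfin, fun R hR => ?_⟩
  set A : ℕ → Set E := fun k => {x : E | R * 2 ^ k ≤ ‖x‖ ∧ ‖x‖ < R * 2 ^ (k+1)} with hA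
  have hAm : ∀ k, MeasurableSet (A k) := fun k =>
    measurable_norm measurableSet_Ico
  have hcover : {x : E | R ≤ ‖x‖} ⊆ ⋃ k, A k := by
    intro x hx
    have hnx : 0 < ‖x‖ := lt_of_lt_of_le hR hx
    have hex : ∃ k : ℕ, ‖x‖ < R * 2 ^ (k+1) := by
      obtain ⟨n, hn⟩ := pow_unbounded_of_one_lt (‖x‖ / R) one_lt_two
      rw [div_lt_iff₀ hR] at hn
      refine ⟨n, ?_⟩
      calc ‖x‖ < 2 ^ n * R := hn
        _ ≤ R * 2 ^ (n+1) := by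
            rw [pow_succ]
            nlinarith [pow_pos (zero_lt_two (α := ℝ)) n, hR]
    refine Set.mem_iUnion.2 ⟨Nat.find hex, ?_, Nat.find_spec hex⟩
    cases h : Nat.find hex with
    | zero => simpa using hx
    | succ m =>
        have hm := Nat.find_min hex (by rw [h]; exact m.lt_succ_self)
        push_neg at hm
        simpa [h] using hm
  have hterm : ∀ k : ℕ, ∫⁻ x in A k, (‖x‖₊ : ℝ≥0∞) ^ (-γ) ≤
      ENNReal.ofReal ((R * 2 ^ k) ^ (-γ) * (R * 2 ^ (k+1)) ^ (d:ℝ)) * V := by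
    intro k
    have h1 : (0:ℝ) < R * 2 ^ k := by positivity
    have h2 : (0:ℝ) < R * 2 ^ (k+1) := by positivity
    have hpt : ∀ x ∈ A k, (‖x‖₊ : ℝ≥0∞) ^ (-γ) ≤ ENNReal.ofReal ((R * 2 ^ k) ^ (-γ)) := by
      intro x hxk
      rw [← ENNReal.ofReal_rpow_of_pos h1, ENNReal.rpow_neg, ENNReal.rpow_neg]
      refine ENNReal.inv_le_inv.2 (ENNReal.rpow_le_rpow ?_ hγ0)
      rw [← enorm_eq_nnnorm, ← ofReal_norm]
      exact ENNReal.ofReal_le_ofReal hxk.1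
    have hvol : volume (A k) ≤ ENNReal.ofReal ((R * 2 ^ (k+1)) ^ (d:ℝ)) * V := by
      have hsub : A k ⊆ Metric.closedBall (0 : E) (R * 2 ^ (k+1)) := fun x hxk =>
        mem_closedBall_zero_iff.2 hxk.2.le
      calc volume (A k) ≤ volume (Metric.closedBall (0 : E) (R * 2 ^ (k+1))) := measure_mono hsub
        _ = ENNReal.ofReal ((R * 2 ^ (k+1)) ^ (d:ℝ)) * V := by
            rw [MeasureTheory.Measure.addHaar_closedBall' volume _ h2.le, ← hV,
              finrank_euclideanSpace_fin, ← Real.rpow_natCast]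
    calc ∫⁻ x in A k, (‖x‖₊ : ℝ≥0∞) ^ (-γ)
        ≤ ∫⁻ _ in A k, ENNReal.ofReal ((R * 2 ^ k) ^ (-γ)) := setLIntegral_mono' (hAm k) hpt
      _ = ENNReal.ofReal ((R * 2 ^ k) ^ (-γ)) * volume (A k) := setLIntegral_const _ _
      _ ≤ ENNReal.ofReal ((R * 2 ^ k) ^ (-γ)) * (ENNReal.ofReal ((R * 2 ^ (k+1)) ^ (d:ℝ)) * V) :=
          mul_le_mul_right hvol _
      _ = ENNReal.ofReal ((R * 2 ^ k) ^ (-γ) * (R * 2 ^ (k+1)) ^ (d:ℝ)) * V := by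
          rw [ENNReal.ofReal_mul (by positivity), mul_assoc]
  calc ∫⁻ x in {x : E | R ≤ ‖x‖}, (‖x‖₊ : ℝ≥0∞) ^ (-γ)
      ≤ ∫⁻ x in ⋃ k, A k, (‖x‖₊ : ℝ≥0∞) ^ (-γ) := lintegral_mono_set hcover
    _ ≤ ∑' k, ∫⁻ x in A k, (‖x‖₊ : ℝ≥0∞) ^ (-γ) := lintegral_iUnion_le _ _
    _ ≤ ∑' k, ENNReal.ofReal ((R * 2 ^ k) ^ (-γ) * (R * 2 ^ (k+1)) ^ (d:ℝ)) * V :=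
        ENNReal.tsum_le_tsum hterm
    _ = ENNReal.ofReal U * V * ENNReal.ofReal R ^ ((d:ℝ) - γ) := by
        rw [ENNReal.tsum_mul_right]
        have : ∀ k : ℕ, ENNReal.ofReal ((R * 2 ^ k) ^ (-γ) * (R * 2 ^ (k+1)) ^ (d:ℝ)) =
            ENNReal.ofReal R ^ ((d:ℝ) - γ) *
              ENNReal.ofReal ((2:ℝ) ^ (d:ℝ) * ((2:ℝ) ^ ((d:ℝ) - γ)) ^ k) := by
          intro k
          rw [dyadic_calc2 R γ (d:ℝ) hR k, mul_assoc,
            ENNReal.ofReal_mul (Real.rpow_nonneg hR.le _), ENNReal.ofReal_rpow_of_pos hR]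
        simp_rw [this]
        rw [ENNReal.tsum_mul_left, ← ENNReal.ofReal_tsum_of_nonneg (fun k => by positivity) hsum,
          ← hU]
        ring


set_option maxHeartbeats 2000000 in
/-- For `1 < q < ∞` and `0 < s < d - d/q`, the operator
`S₂g(x) = ∫_{|y| ≤ |x|/2} |g(y)| / (|y|^s |x-y|^{d-s}) dy` is bounded on `L^q(ℝ^d)`. -/
theorem S2_bounded_Lq (d : ℕ) (q s : ℝ) (hq : 1 < q) (hs : 0 < s)
    (hsd : s < (d : ℝ) - (d : ℝ) / q) :
    ∃ C : ℝ, 0 < C ∧ ∀ g : EuclideanSpace ℝ (Fin d) → ℝ,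
      MeasureTheory.MemLp g (ENNReal.ofReal q) volume →
      ∫⁻ x : EuclideanSpace ℝ (Fin d),
          (∫⁻ y in {y : EuclideanSpace ℝ (Fin d) | ‖y‖ ≤ ‖x‖ / 2},
            (‖g y‖₊ : ℝ≥0∞) /
              ((‖y‖₊ : ℝ≥0∞) ^ s * (‖x - y‖₊ : ℝ≥0∞) ^ ((d : ℝ) - s))) ^ q ≤
        ENNReal.ofReal C * ∫⁻ x : EuclideanSpace ℝ (Fin d), (‖g x‖₊ : ℝ≥0∞) ^ q := by
  classical
  have hq0 : (0:ℝ) < q := lt_trans one_pos hq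
  have hd : 0 < d := by
    rcases Nat.eq_zero_or_pos d with h | h
    · subst h; simp at hsd; linarith
    · exact h
  have hdd : (0:ℝ) < d := by exact_mod_cast hd
  haveI : Nonempty (Fin d) := ⟨⟨0, hd⟩⟩
  set E := EuclideanSpace ℝ (Fin d) with hE
  have hsd' : s < (d:ℝ) := by
    have : 0 < (d:ℝ)/q := by positivity
    linarith
  have hds : (0:ℝ) ≤ (d:ℝ) - s := by linarith
  set q' : ℝ := Real.conjExponent q with hq'def
  have hqq' : q.HolderConjugate q' := Real.HolderConjugate.conjExponent hq
  have hq'0 : (0:ℝ) < q' := hqq'.symm.pos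
  have hq1 : (0:ℝ) < q - 1 := by linarith
  have hkey : s / q < ((d:ℝ) - s) / q' := by
    have hcan : (d:ℝ)/q*q = d := div_mul_cancel₀ _ hq0.ne'
    have h1 : s * q < (d:ℝ) * q - d := by nlinarith [mul_lt_mul_of_pos_right hsd hq0]
    rw [hqq'.conjugate_eq, div_div_eq_mul_div, div_lt_div_iff₀ hq0 hq0]
    nlinarith [h1]
  set α : ℝ := (s / q + ((d:ℝ) - s) / q') / 2 with hα
  have hα1 : s / q < α := by rw [hα]; linarith
  have hα2 : α < ((d:ℝ) - s) / q' := by rw [hα]; linarith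
  have hα0 : 0 < α := lt_trans (by positivity) hα1
  set β₁ : ℝ := s + α * q' with hβ₁
  have hβ₁0 : 0 ≤ β₁ := by
    have := mul_pos hα0 hq'0
    rw [hβ₁]; linarith
  have hβ₁d : β₁ < (d:ℝ) := by
    have h2 : α * q' < (d:ℝ) - s := (lt_div_iff₀ hq'0).1 hα2
    rw [hβ₁]; linarith
  set γ : ℝ := (d:ℝ) + α * q - s with hγ
  have hsαq : s < α * q := (div_lt_iff₀ hq0).1 hα1
  have hγd : (d:ℝ) < γ := by rw [hγ]; linarith
  obtain ⟨c₁, hc₁fin, hc₁⟩ := ball_rpow_bound d hd hβ₁0 hβ₁d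
  obtain ⟨c₂, hc₂fin, hc₂⟩ := tail_rpow_bound d hd hγd
  set K₁ : ℝ≥0∞ := ((2:ℝ≥0∞) ^ ((d:ℝ) - s)) ^ q * c₁ ^ (q - 1) with hK₁
  have h2ne : ((2:ℝ≥0∞) ^ ((d:ℝ) - s)) ≠ ∞ :=
    ENNReal.rpow_ne_top_of_nonneg hds (by simp)
  have hK₁fin : K₁ ≠ ∞ :=
    ENNReal.mul_ne_top (ENNReal.rpow_ne_top_of_nonneg hq0.le h2ne)
      (ENNReal.rpow_ne_top_of_nonneg hq1.le hc₁fin)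
  have h2fin : ((2:ℝ≥0∞) ^ (s - α * q)) ≠ ∞ := by
    rw [show s - α*q = -(α*q - s) by ring, ENNReal.rpow_neg]
    exact ENNReal.inv_ne_top.2 (ENNReal.rpow_pos (by norm_num) (by simp)).ne'
  set K₂ : ℝ≥0∞ := c₂ * (2:ℝ≥0∞) ^ (s - α * q) with hK₂
  have hK₂fin : K₂ ≠ ∞ := ENNReal.mul_ne_top hc₂fin h2fin
  set Cbig : ℝ≥0∞ := K₁ * K₂ with hCbig
  have hCfin : Cbig ≠ ∞ := ENNReal.mul_ne_top hK₁fin hK₂fin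
  refine ⟨Cbig.toReal + 1, by positivity, ?_⟩
  have hCle : Cbig ≤ ENNReal.ofReal (Cbig.toReal + 1) := by
    rw [ENNReal.ofReal_add ENNReal.toReal_nonneg zero_le_one, ENNReal.ofReal_toReal hCfin]
    simp
  intro g hg
  -- measurable representative
  have hgm := hg.1
  set g' : E → ℝ := hgm.mk g with hg'
  have hg'm : Measurable g' := hgm.stronglyMeasurable_mk.measurable
  have hae : g =ᵐ[volume] g' := hgm.ae_eq_mk
  set F : E → ℝ≥0∞ := fun y => (‖g' y‖₊ : ℝ≥0∞) with hF
  have hFm : Measurable F := hg'm.nnnorm.coe_nnreal_ennreal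
  have h0 : ∀ᵐ (z : E) ∂(volume : Measure E), z ≠ 0 := by
    rw [ae_iff]
    simpa only [ne_eq, not_not, Set.setOf_eq_eq_singleton] using measure_singleton (0 : E)
  -- replace g by F in the goal
  have hgoalL : ∀ x : E, (∫⁻ y in {y : E | ‖y‖ ≤ ‖x‖/2},
      (‖g y‖₊:ℝ≥0∞) / ((‖y‖₊:ℝ≥0∞)^s * (‖x-y‖₊:ℝ≥0∞)^((d:ℝ)-s)))
      = ∫⁻ y in {y : E | ‖y‖ ≤ ‖x‖/2},
      F y / ((‖y‖₊:ℝ≥0∞)^s * (‖x-y‖₊:ℝ≥0∞)^((d:ℝ)-s)) := by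
    intro x
    refine lintegral_congr_ae ?_
    filter_upwards [ae_restrict_of_ae hae] with y hy
    rw [hF]; simp only [hy]
  have hgoalR : ∫⁻ x : E, (‖g x‖₊:ℝ≥0∞)^q = ∫⁻ x : E, F x ^ q :=
    lintegral_congr_ae (by filter_upwards [hae] with x hx; rw [hF]; rw [show g x = g' x from hx])
  refine le_trans (le_of_eq (lintegral_congr fun x => by rw [hgoalL x])) ?_
  rw [hgoalR]
  -- notation
  set S : E → Set E := fun x => {y : E | ‖y‖ ≤ ‖x‖ / 2} with hSdef
  have hSm : ∀ x, MeasurableSet (S x) := fun x => measurable_norm measurableSet_Iic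
  have hnnm : Measurable fun y : E => (‖y‖₊ : ℝ≥0∞) := measurable_nnnorm.coe_nnreal_ennreal
  set Φ : E → ℝ≥0∞ := fun y => (‖y‖₊ : ℝ≥0∞) ^ (α * q - s) * F y ^ q with hΦ
  have hΦm : Measurable Φ := (hnnm.pow_const _).mul (hFm.pow_const _)
  set W : E → ℝ≥0∞ := fun x => (‖x‖₊ : ℝ≥0∞) ^ (-γ) with hW
  have hWm : Measurable W := hnnm.pow_const _
  set M : E → ℝ≥0∞ := fun x => ∫⁻ y in S x, Φ y with hM
  have hss : s/q' + s/q = s := by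
    have h := hqq'.inv_add_inv_eq_one
    rw [div_eq_mul_inv s q', div_eq_mul_inv s q, ← mul_add, add_comm q'⁻¹ q⁻¹, h, mul_one]
  -- key pointwise bound
  have key : ∀ x : E, x ≠ 0 →
      (∫⁻ y in S x, F y / ((‖y‖₊:ℝ≥0∞)^s * (‖x-y‖₊:ℝ≥0∞)^((d:ℝ)-s))) ^ q
        ≤ K₁ * (W x * M x) := by
    intro x hx
    have hxn : 0 < ‖x‖ := norm_pos_iff.2 hx
    have hxR : 0 < ‖x‖ / 2 := by positivity
    have hxnn0 : (‖x‖₊ : ℝ≥0∞) ≠ 0 := by simpa [nnnorm_eq_zero] using hx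
    have hxnnt : (‖x‖₊ : ℝ≥0∞) ≠ ⊤ := ENNReal.coe_ne_top
    have h2pos : ((2:ℝ≥0∞) ^ ((d:ℝ) - s)) ≠ 0 :=
      (ENNReal.rpow_pos (by norm_num) (by simp)).ne'
    -- step 1 : bound the kernel
    have step1 : (∫⁻ y in S x, F y / ((‖y‖₊:ℝ≥0∞)^s * (‖x-y‖₊:ℝ≥0∞)^((d:ℝ)-s)))
        ≤ ((2:ℝ≥0∞)^((d:ℝ)-s) * (‖x‖₊:ℝ≥0∞)^(s-(d:ℝ)))
            * ∫⁻ y in S x, F y * (‖y‖₊:ℝ≥0∞)^(-s) := by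
      rw [← lintegral_const_mul _ (f := fun y => F y * (‖y‖₊:ℝ≥0∞)^(-s)) (hFm.mul (hnnm.pow_const _))]
      refine setLIntegral_mono' (hSm x) fun y hy => ?_
      have hxy : ENNReal.ofReal (‖x‖/2) ≤ (‖x-y‖₊ : ℝ≥0∞) := by
        rw [← enorm_eq_nnnorm, ← ofReal_norm]
        refine ENNReal.ofReal_le_ofReal ?_
        have h1 : ‖x‖ - ‖y‖ ≤ ‖x - y‖ := norm_sub_norm_le x y
        have h2 : ‖y‖ ≤ ‖x‖/2 := hy
        linarith
      have hAne : ((‖y‖₊:ℝ≥0∞)^s) ≠ ⊤ := ENNReal.rpow_ne_top_of_nonneg hs.le ENNReal.coe_ne_top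
      have hBne : ((‖x-y‖₊:ℝ≥0∞)^((d:ℝ)-s)) ≠ ⊤ :=
        ENNReal.rpow_ne_top_of_nonneg hds ENNReal.coe_ne_top
      have hBinv : ((‖x-y‖₊:ℝ≥0∞)^((d:ℝ)-s))⁻¹
          ≤ (2:ℝ≥0∞)^((d:ℝ)-s) * (‖x‖₊:ℝ≥0∞)^(s-(d:ℝ)) := by
        have h1 : (ENNReal.ofReal (‖x‖/2))^((d:ℝ)-s) ≤ (‖x-y‖₊:ℝ≥0∞)^((d:ℝ)-s) :=
          ENNReal.rpow_le_rpow hxy hds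
        refine le_trans (ENNReal.inv_le_inv.2 h1) (le_of_eq ?_)
        rw [ENNReal.ofReal_div_of_pos two_pos, ofReal_norm, enorm_eq_nnnorm,
          ENNReal.ofReal_ofNat, ENNReal.div_rpow_of_nonneg _ _ hds,
          ENNReal.inv_div (Or.inl h2ne) (Or.inl h2pos),
          div_eq_mul_inv, show s-(d:ℝ) = -((d:ℝ)-s) by ring, ENNReal.rpow_neg]
      calc F y / ((‖y‖₊:ℝ≥0∞)^s * (‖x-y‖₊:ℝ≥0∞)^((d:ℝ)-s))
          = (F y * ((‖y‖₊:ℝ≥0∞)^s)⁻¹) * ((‖x-y‖₊:ℝ≥0∞)^((d:ℝ)-s))⁻¹ := by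
            rw [div_eq_mul_inv, ENNReal.mul_inv (Or.inr hBne) (Or.inl hAne), ← mul_assoc]
        _ ≤ (F y * ((‖y‖₊:ℝ≥0∞)^s)⁻¹) * ((2:ℝ≥0∞)^((d:ℝ)-s) * (‖x‖₊:ℝ≥0∞)^(s-(d:ℝ))) :=
            mul_le_mul_right hBinv _
        _ = ((2:ℝ≥0∞)^((d:ℝ)-s) * (‖x‖₊:ℝ≥0∞)^(s-(d:ℝ))) * (F y * (‖y‖₊:ℝ≥0∞)^(-s)) := by
            rw [ENNReal.rpow_neg]; ring
    -- step 2 : Hoelder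
    set X : ℝ≥0∞ := ∫⁻ y in S x, (‖y‖₊:ℝ≥0∞)^(-β₁) with hX
    have holder : (∫⁻ y in S x, F y * (‖y‖₊:ℝ≥0∞)^(-s))
        ≤ X ^ (1/q') * (M x) ^ (1/q) := by
      set u : E → ℝ≥0∞ := fun y => (‖y‖₊:ℝ≥0∞)^(-(s/q' + α)) with hu
      set v : E → ℝ≥0∞ := fun y => (‖y‖₊:ℝ≥0∞)^(α - s/q) * F y with hv
      have hum : Measurable u := hnnm.pow_const _
      have hvm : Measurable v := (hnnm.pow_const _).mul hFm
      have heq : (∫⁻ y in S x, F y * (‖y‖₊:ℝ≥0∞)^(-s)) = ∫⁻ y in S x, (u * v) y := by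
        refine lintegral_congr_ae ?_
        filter_upwards [ae_restrict_of_ae h0] with y hy
        have hy0 : (‖y‖₊ : ℝ≥0∞) ≠ 0 := by simpa [nnnorm_eq_zero] using hy
        simp only [hu, hv, Pi.mul_apply]
        rw [← mul_assoc, ← ENNReal.rpow_add _ _ hy0 ENNReal.coe_ne_top,
          show -(s/q' + α) + (α - s/q) = -s by linarith]
        ring
      have hH := ENNReal.lintegral_mul_le_Lp_mul_Lq (volume.restrict (S x)) hqq'.symm
        hum.aemeasurable hvm.aemeasurable
      rw [heq]
      refine le_trans hH (le_of_eq ?_)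
      congr 1
      · congr 1
        refine lintegral_congr fun y => ?_
        rw [hu, ← ENNReal.rpow_mul]
        congr 1
        rw [hβ₁]
        field_simp
      · congr 1
        refine lintegral_congr fun y => ?_
        rw [hv, hΦ, ENNReal.mul_rpow_of_nonneg _ _ hq0.le, ← ENNReal.rpow_mul]
        congr 2
        field_simp
    -- bound X using the ball lemma
    have hXle : X ≤ c₁ * (‖x‖₊:ℝ≥0∞)^((d:ℝ)-β₁) := by
      refine le_trans (hc₁ (‖x‖/2) hxR) (mul_le_mul_right ?_ _)
      refine ENNReal.rpow_le_rpow ?_ (by linarith)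
      calc ENNReal.ofReal (‖x‖/2) ≤ ENNReal.ofReal ‖x‖ := ENNReal.ofReal_le_ofReal (by linarith)
        _ = (‖x‖₊:ℝ≥0∞) := ofReal_norm x
    -- combine
    have hcomb : (∫⁻ y in S x, F y / ((‖y‖₊:ℝ≥0∞)^s * (‖x-y‖₊:ℝ≥0∞)^((d:ℝ)-s)))
        ≤ ((2:ℝ≥0∞)^((d:ℝ)-s) * (‖x‖₊:ℝ≥0∞)^(s-(d:ℝ)))
          * ((c₁ * (‖x‖₊:ℝ≥0∞)^((d:ℝ)-β₁)) ^ (1/q') * (M x) ^ (1/q)) := by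
      refine le_trans step1 (mul_le_mul_right ?_ _)
      refine le_trans holder (mul_le_mul_left ?_ _)
      exact ENNReal.rpow_le_rpow hXle (by positivity)
    refine le_trans (ENNReal.rpow_le_rpow hcomb hq0.le) (le_of_eq ?_)
    rw [ENNReal.mul_rpow_of_nonneg _ _ hq0.le, ENNReal.mul_rpow_of_nonneg _ _ hq0.le,
      ENNReal.mul_rpow_of_nonneg _ _ hq0.le]
    simp only [← ENNReal.rpow_mul]
    rw [show (1/q)*q = 1 by field_simp, ENNReal.rpow_one,
      show (1/q')*q = q - 1 by rw [one_div_mul_eq_div]; exact hqq'.div_conj_eq_sub_one,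
      ENNReal.mul_rpow_of_nonneg c₁ _ hq1.le]
    simp only [← ENNReal.rpow_mul]
    have hxcollect : (‖x‖₊:ℝ≥0∞)^(-γ)
        = (‖x‖₊:ℝ≥0∞)^((s-(d:ℝ))*q) * (‖x‖₊:ℝ≥0∞)^(((d:ℝ)-β₁)*(q-1)) := by
      rw [← ENNReal.rpow_add _ _ hxnn0 hxnnt]
      congr 1
      have hqq : (q-1) * q' = q := hqq'.sub_one_mul_conj
      rw [hβ₁, hγ]
      nlinarith [hqq]
    simp only [hK₁, hW]
    rw [hxcollect, ← ENNReal.rpow_mul]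
    ring
  -- integration via Tonelli
  set T : Set (E × E) := {p : E × E | ‖p.2‖ ≤ ‖p.1‖ / 2} with hT
  have hTm : MeasurableSet T :=
    measurableSet_le measurable_snd.norm (measurable_fst.norm.div_const 2)
  set G : E × E → ℝ≥0∞ := fun p => T.indicator (fun p => Φ p.2) p with hG
  have hGm : Measurable G := (hΦm.comp measurable_snd).indicator hTm
  have hGxy : ∀ x y : E, G (x, y) = (S x).indicator Φ y := by
    intro x y
    simp only [hG]
    by_cases h : y ∈ S x
    · rw [Set.indicator_of_mem h, Set.indicator_of_mem (show ((x,y) : E × E) ∈ T from h)]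
    · rw [Set.indicator_of_notMem h,
        Set.indicator_of_notMem (show ((x,y) : E × E) ∉ T from h)]
  have hMeq : ∀ x, M x = ∫⁻ y, G (x, y) := by
    intro x
    calc M x = ∫⁻ y, (S x).indicator Φ y := (lintegral_indicator (hSm x) Φ).symm
      _ = ∫⁻ y, G (x, y) := lintegral_congr fun y => (hGxy x y).symm
  have hMm : Measurable M := by
    have hMfun : M = fun x => ∫⁻ y, G (x, y) := funext hMeq
    rw [hMfun]
    exact hGm.lintegral_prod_right'
  have main2 : ∫⁻ x, W x * M x ≤ K₂ * ∫⁻ z, F z ^ q := by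
    have hswap : ∫⁻ x, W x * M x = ∫⁻ y, ∫⁻ x, W x * G (x, y) := by
      calc ∫⁻ x, W x * M x = ∫⁻ x, ∫⁻ y, W x * G (x, y) := by
            refine lintegral_congr fun x => ?_
            rw [hMeq x,
              ← lintegral_const_mul _
                (show Measurable fun y => G (x, y) from hGm.comp measurable_prodMk_left)]
        _ = ∫⁻ y, ∫⁻ x, W x * G (x, y) := by
            refine lintegral_lintegral_swap ?_
            exact ((hWm.comp measurable_fst).mul hGm).aemeasurable
    rw [hswap]
    have inner_le : ∀ᵐ y ∂(volume : Measure E),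
        (∫⁻ x, W x * G (x, y)) ≤ K₂ * F y ^ q := by
      filter_upwards [h0] with y hy
      have hyn : 0 < ‖y‖ := norm_pos_iff.2 hy
      have hynn0 : (‖y‖₊ : ℝ≥0∞) ≠ 0 := by simpa [nnnorm_eq_zero] using hy
      have h2y : 0 < 2 * ‖y‖ := by positivity
      have hsetm : MeasurableSet {x : E | 2*‖y‖ ≤ ‖x‖} :=
        measurableSet_le measurable_const measurable_norm
      have hset : ∫⁻ x, W x * G (x, y) = (∫⁻ x in {x : E | 2*‖y‖ ≤ ‖x‖}, W x) * Φ y := by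
        have hfun : (fun x => W x * G (x, y))
            = ({x : E | 2*‖y‖ ≤ ‖x‖}).indicator (fun x => W x * Φ y) := by
          funext x
          simp only [hG]
          have hmem : (x : E) ∈ {x : E | 2*‖y‖ ≤ ‖x‖} ↔ ((x, y) : E × E) ∈ T := by
            simp only [hT, Set.mem_setOf_eq]
            constructor <;> intro h <;> linarith
          by_cases h : ((x,y) : E × E) ∈ T
          · rw [Set.indicator_of_mem (hmem.2 h), Set.indicator_of_mem h]
          · rw [Set.indicator_of_notMem (fun hc => h (hmem.1 hc)),
              Set.indicator_of_notMem h, mul_zero]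
        rw [hfun, lintegral_indicator hsetm _, lintegral_mul_const _ hWm]
      rw [hset]
      have htail := hc₂ (2*‖y‖) h2y
      calc (∫⁻ x in {x : E | 2*‖y‖ ≤ ‖x‖}, W x) * Φ y
          ≤ (c₂ * ENNReal.ofReal (2*‖y‖) ^ ((d:ℝ) - γ)) * Φ y := by
            refine mul_le_mul_left ?_ _
            refine le_trans (le_of_eq ?_) htail
            refine lintegral_congr fun x => rfl
        _ = K₂ * F y ^ q := by
            rw [ENNReal.ofReal_mul (by norm_num : (0:ℝ) ≤ 2), ENNReal.ofReal_ofNat,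
              ofReal_norm, enorm_eq_nnnorm,
              ENNReal.mul_rpow_of_ne_top (by simp) ENNReal.coe_ne_top,
              show (d:ℝ) - γ = s - α*q by rw [hγ]; ring]
            simp only [hΦ, hK₂]
            have hone : (‖y‖₊:ℝ≥0∞)^(α*q-s) * (‖y‖₊:ℝ≥0∞)^(s-α*q) = 1 := by
              rw [← ENNReal.rpow_add _ _ hynn0 ENNReal.coe_ne_top,
                show α*q-s+(s-α*q) = 0 by ring, ENNReal.rpow_zero]
            calc (c₂ * ((2:ℝ≥0∞)^(s-α*q) * (‖y‖₊:ℝ≥0∞)^(s-α*q)))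
                  * ((‖y‖₊:ℝ≥0∞)^(α*q-s) * F y ^ q)
                = (c₂ * (2:ℝ≥0∞)^(s-α*q)) * F y ^ q
                  * ((‖y‖₊:ℝ≥0∞)^(α*q-s) * (‖y‖₊:ℝ≥0∞)^(s-α*q)) := by ring
              _ = c₂ * (2:ℝ≥0∞)^(s-α*q) * F y ^ q := by rw [hone, mul_one]
              _ = c₂ * (2:ℝ≥0∞)^(s-α*q) * F y ^ q := rfl
    calc ∫⁻ y, ∫⁻ x, W x * G (x,y) ≤ ∫⁻ y, K₂ * F y ^ q := lintegral_mono_ae inner_le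
      _ = K₂ * ∫⁻ y, F y ^ q := lintegral_const_mul _ (hFm.pow_const _)
  calc ∫⁻ x, (∫⁻ y in S x, F y / ((‖y‖₊:ℝ≥0∞)^s * (‖x-y‖₊:ℝ≥0∞)^((d:ℝ)-s))) ^ q
      ≤ ∫⁻ x, K₁ * (W x * M x) :=
        lintegral_mono_ae (by filter_upwards [h0] with x hx using key x hx)
    _ = K₁ * ∫⁻ x, W x * M x := lintegral_const_mul _ (hWm.mul hMm)
    _ ≤ K₁ * (K₂ * ∫⁻ z, F z ^ q) := mul_le_mul_right main2 _
    _ = Cbig * ∫⁻ z, F z ^ q := by simp only [hCbig, hK₁]; ring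
    _ ≤ ENNReal.ofReal (Cbig.toReal + 1) * ∫⁻ z, F z ^ q := mul_le_mul_left hCle _
end
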